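/- arXiv:2504.19241 — 6 statements merged into one kernel-verified Lean document; each statement's English description precedes it below -/
import Mathlib

section
/- Let R be an abelian semi-regular ring whose Jacobson radical J(R) is nilpotent. If elements a_0, a_1, …, a_n of R generate R as a two-sided ideal (i.e., the two-sided ideal ∑_{i=0}^n R a_i R equals R), then they already generate R as a left ideal (i.e., the left ideal ∑_{i=0}^n R a_i equals R). -/
/-- A ring is *abelian* if every idempotent is central. -/
def IsAbelianRing (R : Type*) [Ring R] : Prop :=
  ∀ e : R, IsIdempotentElem e → ∀ a : R, e * a = a * e

/-- A ring `R` is *semi-regular* if `R/J(R)` is von Neumann regular (for every `a` there is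
`b` with `a - a*b*a ∈ J(R)`) and idempotents lift modulo the Jacobson radical `J(R)`. -/
def IsSemiregularRing (R : Type*) [Ring R] : Prop :=
  (∀ a : R, ∃ b : R, a - a * b * a ∈ (⊥ : Ideal R).jacobson) ∧
  ∀ a : R, a * a - a ∈ (⊥ : Ideal R).jacobson →
    ∃ e : R, IsIdempotentElem e ∧ e - a ∈ (⊥ : Ideal R).jacobson

/-- The Jacobson radical `J(R)` is nilpotent: there is `n > 0` such that every product of `n`
elements of `J(R)` vanishes (i.e. `J(R)^n = 0`). -/
def JacobsonNilpotent (R : Type*) [Ring R] : Prop :=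
  ∃ n : ℕ, 0 < n ∧ ∀ l : List R, l.length = n →
    (∀ x ∈ l, x ∈ (⊥ : Ideal R).jacobson) → l.prod = 0

/-- If `R` is an abelian semi-regular ring with nilpotent Jacobson radical and the elements
`a 0, …, a n` generate `R` as a two-sided ideal, then they generate `R` as a left ideal. -/
theorem twoSidedSpan_eq_top_imp_leftSpan_eq_top (R : Type*) [Ring R]
    (hab : IsAbelianRing R) (hsr : IsSemiregularRing R) (hnil : JacobsonNilpotent R)
    (n : ℕ) (a : Fin (n + 1) → R)
    (h : TwoSidedIdeal.span (Set.range a) = ⊤) :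
    Ideal.span (Set.range a) = ⊤ := by
  set J : Ideal R := (⊥ : Ideal R).jacobson with hJ
  set L : Ideal R := Ideal.span (Set.range a) with hL
  -- J is right-absorbing
  have hJr : ∀ {x y : R}, x ∈ J → x * y ∈ J :=
    fun {x y} hx => Ideal.mul_mem_right y _ hx
  -- choose quasi-inverses and lifted idempotents
  have hbe : ∀ i : Fin (n + 1), ∃ b e : R, IsIdempotentElem e ∧
      a i - a i * b * a i ∈ J ∧ e - b * a i ∈ J := by
    intro i
    obtain ⟨b, hb⟩ := hsr.1 (a i)
    obtain ⟨e, he, hea⟩ := hsr.2 (b * a i) (by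
      have : b * a i * (b * a i) - b * a i = -(b * (a i - a i * b * a i)) := by noncomm_ring
      rw [this]
      exact neg_mem (Ideal.mul_mem_left _ _ hb))
    exact ⟨b, e, he, hb, hea⟩
  choose b e hidem hreg hlift using hbe
  set K : Ideal R := L ⊔ J with hK
  -- key: a i * r ∈ K for all r
  have key : ∀ (i : Fin (n + 1)) (r : R), a i * r ∈ K := by
    intro i r
    have h1 : a i - a i * e i ∈ J := by
      have : a i - a i * e i =
          (a i - a i * b i * a i) - a i * (e i - b i * a i) := by noncomm_ring
      rw [this]
      exact sub_mem (hreg i) (Ideal.mul_mem_left _ _ (hlift i))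
    have hsplit : a i * r = (a i - a i * e i) * r + ((a i * r * b i) * a i
        + a i * r * (e i - b i * a i)) := by
      have hcomm : e i * r = r * e i := hab (e i) (hidem i) r
      have : (a i - a i * e i) * r + ((a i * r * b i) * a i
          + a i * r * (e i - b i * a i)) = a i * r - a i * (e i * r) + a i * (r * e i) := by
        noncomm_ring
      rw [this, hcomm]; abel
    rw [hsplit]
    refine add_mem (Submodule.mem_sup_right (hJr h1)) (add_mem ?_ ?_)
    · exact Submodule.mem_sup_left (Ideal.mul_mem_left _ _
        (Ideal.subset_span ⟨i, rfl⟩))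
    · exact Submodule.mem_sup_right (Ideal.mul_mem_left _ _ (hlift i))
  -- K absorbs right multiplication
  have Kabs : ∀ {x y : R}, x ∈ K → x * y ∈ K := by
    intro x y hx
    obtain ⟨l, hl, j, hj, rfl⟩ := Submodule.mem_sup.mp hx
    rw [add_mul]
    refine add_mem ?_ (Submodule.mem_sup_right (hJr hj))
    refine Submodule.span_induction (p := fun z _ => z * y ∈ K) ?_ ?_ ?_ ?_ hl
    · rintro z ⟨i, rfl⟩; exact key i y
    · simp
    · intro u v _ _ hu hv; rw [add_mul]; exact add_mem hu hv
    · intro c u _ hu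
      have : (c • u) * y = c • (u * y) := by simp [smul_eq_mul, mul_assoc]
      rw [this]; exact K.smul_mem c hu
  -- build the two-sided ideal with carrier K, deduce 1 ∈ K
  have h1K : (1 : R) ∈ K := by
    have hmem : (1 : R) ∈ TwoSidedIdeal.span (Set.range a) := by rw [h]; trivial
    have := TwoSidedIdeal.mem_span_iff.mp hmem
      (TwoSidedIdeal.mk' (K : Set R) K.zero_mem (fun hx hy => add_mem hx hy)
        (fun hx => neg_mem hx) (fun hy => Ideal.mul_mem_left _ _ hy)
        (fun hx => Kabs hx))
      (by
        rintro z ⟨i, rfl⟩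
        simp only [SetLike.mem_coe, TwoSidedIdeal.mem_mk']
        exact Submodule.mem_sup_left (Ideal.subset_span ⟨i, rfl⟩))
    rwa [TwoSidedIdeal.mem_mk'] at this
  -- now use nilpotency of J
  obtain ⟨l, hl, j, hj, hlj⟩ := Submodule.mem_sup.mp h1K
  obtain ⟨m, hm, hzero⟩ := hnil
  have iter : ∀ k : ℕ, ∃ c ∈ L, (1 : R) = c + j ^ k := by
    intro k
    induction k with
    | zero => exact ⟨0, L.zero_mem, by simp⟩
    | succ k ih =>
      obtain ⟨c, hc, hck⟩ := ih
      refine ⟨l + j * c, add_mem hl (Ideal.mul_mem_left _ _ hc), ?_⟩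
      have : j = j * (c + j ^ k) := by rw [← hck, mul_one]
      calc (1 : R) = l + j := hlj.symm
        _ = l + j * (c + j ^ k) := by rw [← this]
        _ = l + j * c + j * j ^ k := by noncomm_ring
        _ = l + j * c + j ^ (k + 1) := by rw [← pow_succ']
  obtain ⟨c, hc, hck⟩ := iter m
  have hjm : j ^ m = 0 := by
    have := hzero (List.replicate m j) List.length_replicate
      (fun x hx => by rw [List.eq_of_mem_replicate hx]; exact hj)
    rwa [List.prod_replicate] at this
  rw [hjm, add_zero] at hck
  rw [Ideal.eq_top_iff_one]
  exact hck ▸ hc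
end

section
/- Every abelian semi-regular ring is quasi-duo; that is, in an abelian semi-regular ring R, every maximal right ideal of R is a two-sided ideal, and every maximal left ideal of R is a two-sided ideal. -/
open MulOpposite


lemma swapUnit {R : Type*} [Ring R] {a b : R} (h : IsUnit (a * b + 1)) :
    IsUnit (b * a + 1) := by
  obtain ⟨u, hu⟩ := h
  have huv : (a * b + 1) * ↑u⁻¹ = 1 := by rw [← hu]; exact u.mul_inv
  have hvu : (↑u⁻¹ : R) * (a * b + 1) = 1 := by rw [← hu]; exact u.inv_mul
  refine ⟨⟨b * a + 1, 1 - b * ↑u⁻¹ * a, ?_, ?_⟩, rfl⟩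
  · have : (b * a + 1) * (1 - b * ↑u⁻¹ * a)
        = b * a + 1 - b * ((a * b + 1) * ↑u⁻¹) * a := by noncomm_ring
    rw [this, huv]; noncomm_ring
  · have : (1 - b * ↑u⁻¹ * a) * (b * a + 1)
        = b * a + 1 - b * (↑u⁻¹ * (a * b + 1)) * a := by noncomm_ring
    rw [this, hvu]; noncomm_ring

lemma jac_left_inv {R : Type*} [Ring R] {a : R} (ha : a ∈ (⊥ : Ideal R).jacobson) :
    ∃ z : R, z * (a + 1) = 1 := by
  obtain ⟨z, hz⟩ := Ideal.mem_jacobson_iff.mp ha 1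
  rw [Ideal.mem_bot] at hz
  refine ⟨z, ?_⟩
  have : z * (a + 1) = z * 1 * a + z := by noncomm_ring
  rw [this, ← sub_eq_zero]
  simpa using hz

lemma jac_isUnit {R : Type*} [Ring R] {a : R} (ha : a ∈ (⊥ : Ideal R).jacobson) :
    IsUnit (a + 1) := by
  obtain ⟨z, hz⟩ := jac_left_inv ha
  have hza : -(z * a) ∈ (⊥ : Ideal R).jacobson :=
    neg_mem (Ideal.mul_mem_left _ z ha)
  obtain ⟨w, hw⟩ := jac_left_inv hza
  have hzeq : -(z * a) + 1 = z := by
    have : z * (a + 1) = z * a + z := by noncomm_ring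
    rw [this] at hz
    rw [← hz]; abel
  rw [hzeq] at hw
  have hright : (a + 1) * z = 1 := by
    calc (a + 1) * z = (w * z) * ((a + 1) * z) := by rw [hw, one_mul]
      _ = w * (z * (a + 1)) * z := by noncomm_ring
      _ = w * z := by rw [hz]; noncomm_ring
      _ = 1 := hw
  exact ⟨⟨a + 1, z, hright, hz⟩, rfl⟩

lemma mem_jac_iff {R : Type*} [Ring R] {x : R} :
    x ∈ (⊥ : Ideal R).jacobson ↔ ∀ y : R, IsUnit (x * y + 1) := by
  constructor
  · intro h y
    have : x * y ∈ (⊥ : Ideal R).jacobson :=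
      Ideal.mul_mem_right y _ h
    exact jac_isUnit this
  · intro h
    rw [Ideal.mem_jacobson_iff]
    intro y
    obtain ⟨u, hu⟩ := swapUnit (h y)
    refine ⟨↑u⁻¹, ?_⟩
    rw [Ideal.mem_bot]
    have hvu : (↑u⁻¹ : R) * (y * x + 1) = 1 := by rw [← hu]; exact u.inv_mul
    have : (↑u⁻¹ : R) * y * x + ↑u⁻¹ - 1 = ↑u⁻¹ * (y * x + 1) - 1 := by noncomm_ring
    rw [this, hvu, sub_self]

lemma jac_op_iff {R : Type*} [Ring R] {x : R} :
    op x ∈ (⊥ : Ideal Rᵐᵒᵖ).jacobson ↔ x ∈ (⊥ : Ideal R).jacobson := by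
  rw [mem_jac_iff, mem_jac_iff]
  constructor
  · intro h y
    have := h (op y)
    rw [← op_mul, ← op_one, ← op_add] at this
    exact swapUnit this.unop
  · intro h y
    have : IsUnit (unop y * x + 1) := swapUnit (h (unop y))
    have := this.op
    rw [op_add, op_mul, op_one] at this
    simpa using this

lemma main_lemma {R : Type*} [Ring R] (hab : IsAbelianRing R) (hsr : IsSemiregularRing R) :
    ∀ M : Ideal R, M.IsMaximal → ∀ a ∈ M, ∀ r : R, a * r ∈ M := by
  intro M hM a ha r
  have hJM : (⊥ : Ideal R).jacobson ≤ M := sInf_le ⟨bot_le, hM⟩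
  obtain ⟨b, hb⟩ := hsr.1 a
  have hidem : (b * a) * (b * a) - b * a ∈ (⊥ : Ideal R).jacobson := by
    have h1 : a * b * a - a ∈ (⊥ : Ideal R).jacobson := by
      have := neg_mem hb; simpa using this
    have h2 : b * (a * b * a - a) ∈ (⊥ : Ideal R).jacobson :=
      Ideal.mul_mem_left _ b h1
    have : (b * a) * (b * a) - b * a = b * (a * b * a - a) := by noncomm_ring
    rw [this]; exact h2
  obtain ⟨e, he, hea⟩ := hsr.2 (b * a) hidem
  have heM : e ∈ M := by
    have h1 : e - b * a ∈ M := hJM hea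
    have h2 : b * a ∈ M := M.mul_mem_left b ha
    have := M.add_mem h1 h2
    simpa using this
  have haeJ : a - a * e ∈ (⊥ : Ideal R).jacobson := by
    have h1 : a * (e - b * a) ∈ (⊥ : Ideal R).jacobson :=
      Ideal.mul_mem_left _ a hea
    have : a - a * e = (a - a * b * a) - a * (e - b * a) := by noncomm_ring
    rw [this]; exact Ideal.sub_mem _ hb h1
  have hcomm : e * r = r * e := hab e he r
  have key : a * r = (a - a * e) * r + (a * r) * e := by
    have h3 : (a - a * e) * r = a * r - a * r * e := by
      rw [sub_mul, mul_assoc a e r, hcomm, ← mul_assoc]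
    rw [h3]; noncomm_ring
  rw [key]
  have hJr : (a - a * e) * r ∈ (⊥ : Ideal R).jacobson :=
    Ideal.mul_mem_right r _ haeJ
  exact M.add_mem (hJM hJr) (M.mul_mem_left (a * r) heM)

lemma abelian_op {R : Type*} [Ring R] (hab : IsAbelianRing R) : IsAbelianRing Rᵐᵒᵖ := by
  intro e he x
  have he' : IsIdempotentElem e.unop := by
    have := congrArg unop he
    rwa [unop_mul] at this
  apply unop_injective
  rw [unop_mul, unop_mul]
  exact (hab e.unop he' x.unop).symm

lemma semiregular_op {R : Type*} [Ring R] (hsr : IsSemiregularRing R) :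
    IsSemiregularRing Rᵐᵒᵖ := by
  constructor
  · intro a
    obtain ⟨b, hb⟩ := hsr.1 a.unop
    refine ⟨op b, ?_⟩
    have : a - a * op b * a = op (a.unop - a.unop * b * a.unop) := by
      apply unop_injective; simp [mul_assoc]
    rw [this]
    exact jac_op_iff.mpr hb
  · intro a ha
    have ha' : a.unop * a.unop - a.unop ∈ (⊥ : Ideal R).jacobson := by
      have : a * a - a = op (a.unop * a.unop - a.unop) := by
        apply unop_injective; simp
      rw [this] at ha
      exact jac_op_iff.mp ha
    obtain ⟨e, he, hea⟩ := hsr.2 a.unop ha'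
    refine ⟨op e, ?_, ?_⟩
    · show op e * op e = op e
      rw [← op_mul, he]
    · have : op e - a = op (e - a.unop) := by apply unop_injective; simp
      rw [this]
      exact jac_op_iff.mpr hea

/-- Abelian semi-regular rings are quasi-duo: every maximal right ideal (viewed as a maximal
left ideal of `Rᵐᵒᵖ`) is two-sided, and every maximal left ideal is two-sided. -/
theorem abelian_semiregular_quasiDuo (R : Type*) [Ring R]
    (hab : IsAbelianRing R) (hsr : IsSemiregularRing R) :
    (∀ M : Ideal Rᵐᵒᵖ, M.IsMaximal →
      ∀ a : R, MulOpposite.op a ∈ M → ∀ r : R, MulOpposite.op (r * a) ∈ M) ∧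
    (∀ M : Ideal R, M.IsMaximal → ∀ a ∈ M, ∀ r : R, a * r ∈ M) := by
  constructor
  · intro M hM a haM r
    have := main_lemma (abelian_op hab) (semiregular_op hsr) M hM (op a) haM (op r)
    rwa [← op_mul] at this
  · exact main_lemma hab hsr
end

section
/- Let R be an abelian semi-regular ring. Then every maximal left ideal of R is a prime (two-sided) ideal of R, and likewise every maximal right ideal of R is a prime (two-sided) ideal of R. -/
section Helpers

variable {S : Type*} [Ring S]

lemma isUnit_one_add_swap {x y : S} (h : IsUnit (1 + x * y)) :
    IsUnit (1 + y * x) := by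
  obtain ⟨u, h2, h1⟩ := isUnit_iff_exists.1 h
  refine isUnit_iff_exists.2 ⟨1 - y * u * x, ?_, ?_⟩
  · have e : (1 + y * x) * (1 - y * u * x) = 1 + y * (x - (1 + x * y) * u * x) := by
      noncomm_ring
    rw [e, h2, one_mul, sub_self, mul_zero, add_zero]
  · have e : (1 - y * u * x) * (1 + y * x) = 1 + y * (x - u * (1 + x * y) * x) := by
      noncomm_ring
    rw [e, h1, one_mul, sub_self, mul_zero, add_zero]

lemma isUnit_of_mem_jacobson {x : S} (hx : x ∈ (⊥ : Ideal S).jacobson) (y : S) :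
    IsUnit (y * x + 1) := by
  obtain ⟨z, hz⟩ := Ideal.mem_jacobson_iff.1 hx y
  rw [Ideal.mem_bot, sub_eq_zero, mul_assoc, ← mul_add_one z] at hz
  -- hz : z * (y * x + 1) = 1
  have hz2 : z - 1 ∈ (⊥ : Ideal S).jacobson := by
    have : z - 1 = -(z * (y * x + 1) - z) := by rw [hz]; abel
    rw [this]
    have : z * (y * x + 1) - z = (z * y) * x := by noncomm_ring
    rw [this]
    exact neg_mem (Ideal.mul_mem_left _ _ hx)
  obtain ⟨w, hw⟩ := Ideal.exists_mul_sub_mem_of_sub_one_mem_jacobson z hz2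
  rw [Ideal.mem_bot, sub_eq_zero] at hw
  have hw2 : w = y * x + 1 := by
    calc w = w * (z * (y * x + 1)) := by rw [hz, mul_one]
    _ = (w * z) * (y * x + 1) := by rw [mul_assoc]
    _ = y * x + 1 := by rw [hw, one_mul]
  exact isUnit_iff_exists.2 ⟨z, by rw [← hw2]; exact hw, hz⟩

open MulOpposite in
lemma op_mem_jacobson_iff {x : S} :
    op x ∈ (⊥ : Ideal Sᵐᵒᵖ).jacobson ↔ x ∈ (⊥ : Ideal S).jacobson := by
  constructor
  · intro h
    rw [Ideal.mem_jacobson_iff]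
    intro y
    have h1 : IsUnit (op y * op x + 1) := isUnit_of_mem_jacobson h (op y)
    rw [show op y * op x + 1 = op (x * y + 1) by rfl, isUnit_op] at h1
    have h2 : IsUnit (1 + y * x) :=
      isUnit_one_add_swap (by rwa [add_comm] at h1)
    obtain ⟨z, _, hz⟩ := isUnit_iff_exists.1 h2
    rw [add_comm] at hz
    refine ⟨z, ?_⟩
    rw [Ideal.mem_bot, sub_eq_zero, mul_assoc, ← mul_add_one z]
    exact hz
  · intro h
    rw [Ideal.mem_jacobson_iff]
    intro y
    have h1 : IsUnit (y.unop * x + 1) := isUnit_of_mem_jacobson h y.unop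
    have h2 : IsUnit (1 + x * y.unop) :=
      isUnit_one_add_swap (by rwa [add_comm] at h1)
    obtain ⟨z, hz, _⟩ := isUnit_iff_exists.1 h2
    rw [add_comm] at hz
    refine ⟨op z, ?_⟩
    rw [Ideal.mem_bot, sub_eq_zero, mul_assoc, ← mul_add_one (op z)]
    rw [show op z * (y * op x + 1) = op ((x * y.unop + 1) * z) by
      rw [show y * op x = op (x * y.unop) by simp]; rfl]
    rw [hz]
    rfl

end Helpers

/-- Main workhorse: the statement for maximal left ideals of any abelian semiregular ring. -/
lemma key_lemma (S : Type*) [Ring S] (hab : IsAbelianRing S) (hsr : IsSemiregularRing S) :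
    ∀ M : Ideal S, M.IsMaximal →
      M ≠ ⊤ ∧ (∀ a ∈ M, ∀ r : S, a * r ∈ M) ∧
        ∀ a b : S, (∀ r : S, a * r * b ∈ M) → a ∈ M ∨ b ∈ M := by
  intro M hM
  set J := (⊥ : Ideal S).jacobson with hJ
  have hJM : J ≤ M := sInf_le ⟨bot_le, hM⟩
  have hJr : ∀ {x y : S}, x ∈ J → x * y ∈ J :=
    fun {x y} hx => Ideal.mul_mem_right y J hx
  -- key element decomposition
  have key : ∀ a : S, ∃ e b j : S, IsIdempotentElem e ∧ (∀ x, e * x = x * e) ∧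
      a - e * a ∈ J ∧ j ∈ J ∧ e = b * a + j := by
    intro a
    obtain ⟨b, hb⟩ := hsr.1 a
    have ht : (b * a) * (b * a) - b * a ∈ J := by
      have : (b * a) * (b * a) - b * a = -(b * (a - a * b * a)) := by noncomm_ring
      rw [this]
      exact neg_mem (Ideal.mul_mem_left _ _ hb)
    obtain ⟨e, he, heJ⟩ := hsr.2 (b * a) ht
    refine ⟨e, b, e - b * a, he, hab e he, ?_, heJ, by abel⟩
    have : a - e * a = (a - a * b * a) - a * (e - b * a) := by
      rw [hab e he a]; noncomm_ring
    rw [this]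
    exact sub_mem hb (Ideal.mul_mem_left _ _ heJ)
  -- two-sidedness
  have two : ∀ a ∈ M, ∀ r : S, a * r ∈ M := by
    intro a ha r
    obtain ⟨e, b, j, he, hc, haJ, hjJ, hebj⟩ := key a
    have heM : e ∈ M := by
      rw [hebj]
      exact add_mem (Ideal.mul_mem_left _ _ ha) (hJM hjJ)
    have : a * r = (a * r) * e + (a - e * a) * r := by
      rw [← hc (a * r)]; noncomm_ring
    rw [this]
    exact add_mem (Ideal.mul_mem_left _ _ heM) (hJM (hJr haJ))
  refine ⟨hM.ne_top, two, ?_⟩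
  intro a b habr
  by_cases ha : a ∈ M
  · exact Or.inl ha
  · right
    have hsup : M ⊔ Ideal.span {a} = ⊤ := by
      refine hM.1.2 _ ?_
      refine lt_of_le_of_ne le_sup_left fun h => ha ?_
      rw [h]
      exact Ideal.mem_sup_right (Ideal.subset_span rfl)
    have h1 : (1 : S) ∈ M ⊔ Ideal.span {a} := hsup ▸ Submodule.mem_top
    obtain ⟨m, hm, s, hs, hms⟩ := Submodule.mem_sup.1 h1
    obtain ⟨r, hr⟩ := Ideal.mem_span_singleton'.1 hs
    have h1' : m + r * a = 1 := by rw [hr, hms]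
    have hb : b = m * b + r * (a * b) := by
      rw [← mul_assoc, ← add_mul, h1', one_mul]
    rw [hb]
    have hab' : a * b ∈ M := by simpa using habr 1
    exact add_mem (two m hm b) (Ideal.mul_mem_left _ _ hab')


/-- In an abelian semi-regular ring, every maximal left ideal is a prime two-sided ideal,
and every maximal right ideal is a prime two-sided ideal. -/
theorem abelian_semiregular_maximal_isPrime (R : Type*) [Ring R]
    (hab : IsAbelianRing R) (hsr : IsSemiregularRing R) :
    (∀ M : Ideal R, M.IsMaximal →
      M ≠ ⊤ ∧ (∀ a ∈ M, ∀ r : R, a * r ∈ M) ∧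
        ∀ a b : R, (∀ r : R, a * r * b ∈ M) → a ∈ M ∨ b ∈ M) ∧
    (∀ M : Ideal Rᵐᵒᵖ, M.IsMaximal →
      M ≠ ⊤ ∧ (∀ a : R, MulOpposite.op a ∈ M → ∀ r : R, MulOpposite.op (r * a) ∈ M) ∧
        ∀ a b : R, (∀ r : R, MulOpposite.op (a * r * b) ∈ M) →
          MulOpposite.op a ∈ M ∨ MulOpposite.op b ∈ M) := by
  constructor
  · exact key_lemma R hab hsr
  · have hab' : IsAbelianRing Rᵐᵒᵖ := by
      intro e he a
      have he' : IsIdempotentElem e.unop := by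
        have := congrArg MulOpposite.unop he
        simpa [IsIdempotentElem] using this
      have := hab e.unop he' a.unop
      apply MulOpposite.unop_injective
      simpa using this.symm
    have hsr' : IsSemiregularRing Rᵐᵒᵖ := by
      constructor
      · intro a
        obtain ⟨b, hb⟩ := hsr.1 a.unop
        refine ⟨MulOpposite.op b, ?_⟩
        have : a - a * MulOpposite.op b * a = MulOpposite.op (a.unop - a.unop * b * a.unop) := by
          simp [mul_assoc]
        rw [this, op_mem_jacobson_iff]
        exact hb
      · intro a ha
        have ha' : a.unop * a.unop - a.unop ∈ (⊥ : Ideal R).jacobson := by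
          rw [← op_mem_jacobson_iff]
          have : MulOpposite.op (a.unop * a.unop - a.unop) = a * a - a := by simp
          rw [this]
          exact ha
        obtain ⟨e, he, heJ⟩ := hsr.2 a.unop ha'
        refine ⟨MulOpposite.op e, ?_, ?_⟩
        · have : MulOpposite.op e * MulOpposite.op e = MulOpposite.op (e * e) := rfl
          unfold IsIdempotentElem
          rw [this, he]
        · have : MulOpposite.op e - a = MulOpposite.op (e - a.unop) := by simp
          rw [this, op_mem_jacobson_iff]
          exact heJ
    intro M hM
    obtain ⟨h1, h2, h3⟩ := key_lemma Rᵐᵒᵖ hab' hsr' M hM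
    refine ⟨h1, ?_, ?_⟩
    · intro a ha r
      have := h2 (MulOpposite.op a) ha (MulOpposite.op r)
      simpa using this
    · intro a b hr
      have := h3 (MulOpposite.op b) (MulOpposite.op a) ?_
      · exact this.symm
      · intro ρ
        have := hr ρ.unop
        have e : MulOpposite.op b * ρ * MulOpposite.op a
            = MulOpposite.op (a * ρ.unop * b) := by
          simp [mul_assoc]
        rw [e]
        exact this
end

section
/- Let R be a ring, S a monoid, and ω : S → End(R) a monoid homomorphism into the monoid of ring endomorphisms of R. Assume R is S-compatible (i.e., for every s ∈ S and all a, b ∈ R one has a b = 0 if and only if a ω_s(b) = 0), abelian, and semi-regular with J(R) nilpotent. Then for every maximal right ideal M of R, every s ∈ S, and all a, b ∈ R: a b ∈ M if and only if a ω_s(b) ∈ M. The same holds for every maximal left ideal M of R. -/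
section JacGeneral

open MulOpposite

variable {A : Type*} [Ring A]

/-- `1 - y*x` is left invertible when `x` is in the Jacobson radical. -/
lemma jac_left_inv_s6 {x : A} (hx : x ∈ (⊥ : Ideal A).jacobson) (y : A) :
    ∃ z : A, z * (1 - y * x) = 1 := by
  obtain ⟨z, hz⟩ := Ideal.mem_jacobson_iff.1 hx (-y)
  rw [Ideal.mem_bot] at hz
  refine ⟨z, ?_⟩
  have h : z * (1 - y * x) = z * -y * x + z := by noncomm_ring
  rw [h]
  exact sub_eq_zero.mp (by linear_combination (norm := noncomm_ring) hz)

lemma jac_isUnit_s6 {x : A} (hx : x ∈ (⊥ : Ideal A).jacobson) : IsUnit (1 - x) := by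
  obtain ⟨z, hz⟩ := jac_left_inv_s6 hx 1
  rw [one_mul] at hz
  have hzx : -(z * x) ∈ (⊥ : Ideal A).jacobson :=
    neg_mem (Ideal.mul_mem_left _ z hx)
  obtain ⟨w, hw⟩ := jac_left_inv_s6 hzx 1
  have hwz : w * z = 1 := by
    have h1 : 1 - 1 * -(z * x) = z - (z * (1 - x) - 1) := by noncomm_ring
    rw [h1, hz] at hw
    simpa using hw
  have hwe : w = 1 - x := by
    calc w = w * (z * (1 - x)) := by rw [hz, mul_one]
    _ = (w * z) * (1 - x) := by rw [mul_assoc]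
    _ = 1 - x := by rw [hwz, one_mul]
  exact ⟨⟨1 - x, z, by rw [← hwe]; exact hwz, hz⟩, rfl⟩

/-- Jacobson's lemma. -/
lemma jac_lemma {a b : A} (h : IsUnit (1 - a * b)) : IsUnit (1 - b * a) := by
  obtain ⟨u, h1, h2⟩ := isUnit_iff_exists.1 h
  refine isUnit_iff_exists.2 ⟨1 + b * u * a, ?_, ?_⟩
  · have key : (1 - b * a) * (1 + b * u * a) = 1 - b * a + b * ((1 - a * b) * u) * a := by
      noncomm_ring
    rw [key, h1]; noncomm_ring
  · have key : (1 + b * u * a) * (1 - b * a) = 1 - b * a + b * (u * (1 - a * b)) * a := by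
      noncomm_ring
    rw [key, h2]; noncomm_ring

lemma mem_jac_iff_left {x : A} :
    x ∈ (⊥ : Ideal A).jacobson ↔ ∀ y : A, IsUnit (1 - y * x) := by
  constructor
  · intro hx y
    exact jac_isUnit_s6 (Ideal.mul_mem_left _ y hx)
  · intro h
    rw [Ideal.jacobson]
    refine Ideal.mem_sInf.2 ?_
    rintro M ⟨-, hM⟩
    by_contra hx
    obtain ⟨y, i, hi, hyi⟩ := hM.exists_inv hx
    have h2 : 1 - y * x = i := by rw [← hyi]; abel
    exact hM.ne_top (M.eq_top_of_isUnit_mem (h2 ▸ hi) (h y))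

lemma mem_jac_iff_right {x : A} :
    x ∈ (⊥ : Ideal A).jacobson ↔ ∀ y : A, IsUnit (1 - x * y) := by
  constructor
  · intro hx y
    exact jac_lemma (mem_jac_iff_left.1 hx y)
  · intro h
    exact mem_jac_iff_left.2 fun y => jac_lemma (h y)

lemma jac_mul_right {x : A} (hx : x ∈ (⊥ : Ideal A).jacobson) (r : A) :
    x * r ∈ (⊥ : Ideal A).jacobson := by
  refine mem_jac_iff_left.2 fun y => ?_
  have h : 1 - y * (x * r) = 1 - (y * x) * r := by noncomm_ring
  rw [h]
  exact jac_lemma (jac_isUnit_s6 (Ideal.mul_mem_left _ r (Ideal.mul_mem_left _ y hx)))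

lemma mem_jac_op_iff {x : A} :
    op x ∈ (⊥ : Ideal Aᵐᵒᵖ).jacobson ↔ x ∈ (⊥ : Ideal A).jacobson := by
  constructor
  · intro h
    refine mem_jac_iff_right.2 fun y => ?_
    have hu := mem_jac_iff_left.1 h (op y)
    have he : (1 : Aᵐᵒᵖ) - op y * op x = op (1 - x * y) := by simp
    rw [he, isUnit_op] at hu
    exact hu
  · intro h
    refine mem_jac_iff_left.2 fun y => ?_
    have he : (1 : Aᵐᵒᵖ) - y * op x = op (1 - x * unop y) := by simp
    rw [he, isUnit_op]
    exact mem_jac_iff_right.1 h (unop y)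

end JacGeneral
section Master

open MulOpposite

variable {A : Type*} [Ring A]
variable (hab : ∀ e : A, IsIdempotentElem e → ∀ a : A, e * a = a * e)
variable (hreg : ∀ a : A, ∃ b : A, a - a * b * a ∈ (⊥ : Ideal A).jacobson)
variable (hlift : ∀ a : A, a * a - a ∈ (⊥ : Ideal A).jacobson →
    ∃ e : A, IsIdempotentElem e ∧ e - a ∈ (⊥ : Ideal A).jacobson)

include hab hreg hlift

lemma exists_idem_jac (x : A) : ∃ e c : A, IsIdempotentElem e ∧
    e - c * x ∈ (⊥ : Ideal A).jacobson ∧ x - e * x ∈ (⊥ : Ideal A).jacobson := by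
  obtain ⟨c, hc⟩ := hreg x
  have hcx : (c * x) * (c * x) - c * x ∈ (⊥ : Ideal A).jacobson := by
    have h : (c * x) * (c * x) - c * x = -(c * (x - x * c * x)) := by noncomm_ring
    rw [h]
    exact neg_mem (Ideal.mul_mem_left _ c hc)
  obtain ⟨e, he, hecx⟩ := hlift _ hcx
  refine ⟨e, c, he, hecx, ?_⟩
  have h : x - e * x = x - x * e := by rw [hab e he x]
  have h2 : x - x * e = (x - x * c * x) - x * (e - c * x) := by noncomm_ring
  rw [h, h2]
  exact sub_mem hc (Ideal.mul_mem_left _ x hecx)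

lemma sq_mem {x : A} (hx : x * x ∈ (⊥ : Ideal A).jacobson) : x ∈ (⊥ : Ideal A).jacobson := by
  obtain ⟨e, c, he, hecx, hxex⟩ := exists_idem_jac hab hreg hlift x
  have hex : e * x ∈ (⊥ : Ideal A).jacobson := by
    have h : e * x = (e - c * x) * x + c * (x * x) := by noncomm_ring
    rw [h]
    exact add_mem (jac_mul_right hecx x) (Ideal.mul_mem_left _ c hx)
  have := add_mem hxex hex
  simpa using this

lemma nilp_mem {x : A} (hx : IsNilpotent x) : x ∈ (⊥ : Ideal A).jacobson := by
  have aux : ∀ m : ℕ, ∀ y : A, y ^ (2 ^ m) ∈ (⊥ : Ideal A).jacobson →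
      y ∈ (⊥ : Ideal A).jacobson := by
    intro m
    induction m with
    | zero => intro y hy; simpa using hy
    | succ m ih =>
      intro y hy
      refine ih y (sq_mem hab hreg hlift ?_)
      have h : y ^ 2 ^ (m + 1) = y ^ 2 ^ m * y ^ 2 ^ m := by
        rw [← pow_add, pow_succ]; ring_nf
      rwa [h] at hy
  obtain ⟨k, hk⟩ := hx
  refine aux k x ?_
  have hk2 : x ^ (2 ^ k) = 0 := by
    have h : x ^ (2 ^ k) = x ^ k * x ^ (2 ^ k - k) := by
      rw [← pow_add, Nat.add_sub_cancel' (Nat.lt_two_pow_self (n := k)).le]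
    rw [h, hk, zero_mul]
  rw [hk2]
  exact zero_mem _

lemma max_right_mul {M : Ideal A} (hM : M.IsMaximal) {m : A} (hm : m ∈ M) (r : A) :
    m * r ∈ M := by
  have hJM : (⊥ : Ideal A).jacobson ≤ M := sInf_le ⟨bot_le, hM⟩
  obtain ⟨e, c, he, hecm, hmem⟩ := exists_idem_jac hab hreg hlift m
  have eq1 : m * r = (m - e * m) * r + e * (m * r) := by noncomm_ring
  have eq2 : e * (m * r) = (m * r) * e := hab e he (m * r)
  have eq3 : (m * r) * e = (m * r * c) * m + (m * r) * (e - c * m) := by noncomm_ring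
  rw [eq1, eq2, eq3]
  refine add_mem (hJM (jac_mul_right hmem r)) (add_mem ?_ ?_)
  · exact Ideal.mul_mem_left _ _ hm
  · exact Ideal.mul_mem_left _ _ (hJM hecm)

lemma max_inv {M : Ideal A} (hM : M.IsMaximal) {b : A} (hb : b ∉ M) :
    ∃ r : A, 1 - b * r ∈ M ∧ 1 - r * b ∈ M := by
  obtain ⟨y, i, hi, hyi⟩ := hM.exists_inv hb
  have h1 : 1 - y * b ∈ M := by
    have : 1 - y * b = i := by rw [← hyi]; abel
    rwa [this]
  have hy : y ∉ M := by
    intro hy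
    refine hM.ne_top ((Ideal.eq_top_iff_one M).2 ?_)
    rw [← hyi]
    exact add_mem (max_right_mul hab hreg hlift hM hy b) hi
  obtain ⟨t, j, hj, htj⟩ := hM.exists_inv hy
  have h2 : 1 - t * y ∈ M := by
    have : 1 - t * y = j := by rw [← htj]; abel
    rwa [this]
  have hbt : b - t ∈ M := by
    have h : b - t = (1 - t * y) * b - t * (1 - y * b) := by noncomm_ring
    rw [h]
    exact sub_mem (max_right_mul hab hreg hlift hM h2 b) (Ideal.mul_mem_left _ t h1)
  refine ⟨y, ?_, h1⟩
  have h : 1 - b * y = (1 - t * y) + (t - b) * y := by noncomm_ring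
  rw [h]
  refine add_mem h2 (max_right_mul hab hreg hlift hM ?_ y)
  simpa using neg_mem hbt

lemma max_prime {M : Ideal A} (hM : M.IsMaximal) (a b : A) :
    a * b ∈ M ↔ a ∈ M ∨ b ∈ M := by
  constructor
  · intro h
    by_cases hb : b ∈ M
    · exact Or.inr hb
    · obtain ⟨r, hbr, -⟩ := max_inv hab hreg hlift hM hb
      left
      have heq : a = a * (1 - b * r) + (a * b) * r := by noncomm_ring
      rw [heq]
      exact add_mem (Ideal.mul_mem_left _ a hbr) (max_right_mul hab hreg hlift hM h r)
  · rintro (ha | hb)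
    · exact max_right_mul hab hreg hlift hM ha b
    · exact Ideal.mul_mem_left _ a hb

lemma max_fix (hJn : ∀ x ∈ (⊥ : Ideal A).jacobson, IsNilpotent x)
    (σ : A →+* A) (hc : ∀ a b : A, a * b = 0 ↔ a * σ b = 0)
    {M : Ideal A} (hM : M.IsMaximal) (x : A) : x ∈ M ↔ σ x ∈ M := by
  have hJM : (⊥ : Ideal A).jacobson ≤ M := sInf_le ⟨bot_le, hM⟩
  have hσJ : ∀ y ∈ (⊥ : Ideal A).jacobson, σ y ∈ (⊥ : Ideal A).jacobson := fun y hy =>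
    nilp_mem hab hreg hlift ((hJn y hy).map σ)
  have hfix : ∀ e : A, IsIdempotentElem e → σ e = e := by
    intro e he
    have h1 : e * (1 - e) = 0 := by
      have : e * (1 - e) = e - e * e := by noncomm_ring
      rw [this, he, sub_self]
    have h1' : e * σ (1 - e) = 0 := (hc e (1 - e)).1 h1
    rw [map_sub, map_one, mul_sub, mul_one, sub_eq_zero] at h1'
    have h2 : (1 - e) * e = 0 := by
      have : (1 - e) * e = e - e * e := by noncomm_ring
      rw [this, he, sub_self]
    have h2' : (1 - e) * σ e = 0 := (hc (1 - e) e).1 h2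
    rw [sub_mul, one_mul, sub_eq_zero] at h2'
    rw [h2', ← h1']
  obtain ⟨e, c, he, hecx, hxex⟩ := exists_idem_jac hab hreg hlift x
  have hσecx : e - σ c * σ x ∈ (⊥ : Ideal A).jacobson := by
    have := hσJ _ hecx
    rwa [map_sub, map_mul, hfix e he] at this
  have hσxex : σ x - e * σ x ∈ (⊥ : Ideal A).jacobson := by
    have := hσJ _ hxex
    rwa [map_sub, map_mul, hfix e he] at this
  have aux : ∀ (u v : A), u - v * x ∈ (⊥ : Ideal A).jacobson →
      True := fun _ _ _ => trivial
  constructor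
  · intro hx
    have heM : e ∈ M := by
      have h : e = (e - c * x) + c * x := by abel
      rw [h]
      exact add_mem (hJM hecx) (Ideal.mul_mem_left _ c hx)
    have h : σ x = (σ x - e * σ x) + e * σ x := by abel
    rw [h]
    exact add_mem (hJM hσxex) (max_right_mul hab hreg hlift hM heM (σ x))
  · intro hx
    have heM : e ∈ M := by
      have h : e = (e - σ c * σ x) + σ c * σ x := by abel
      rw [h]
      exact add_mem (hJM hσecx) (Ideal.mul_mem_left _ (σ c) hx)
    have h : x = (x - e * x) + e * x := by abel
    rw [h]
    exact add_mem (hJM hxex) (max_right_mul hab hreg hlift hM heM x)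

end Master

open MulOpposite

/-- Let `ω : S →* End(R)` be a monoid homomorphism with `R` `S`-compatible, abelian,
semi-regular, and `J(R)` nilpotent.  Then for every maximal right ideal `M` (viewed as a
maximal left ideal of `Rᵐᵒᵖ`), every `s ∈ S` and all `a b : R`, `a * b ∈ M ↔ a * ω s b ∈ M`;
likewise for every maximal left ideal of `R`. -/
theorem mem_maximal_iff_omega_mem_maximal (R S : Type*) [Ring R] [Monoid S]
    (ω : S →* (R →+* R))
    (hcomp : ∀ (s : S) (a b : R), a * b = 0 ↔ a * (ω s b) = 0)
    (hab : IsAbelianRing R) (hsr : IsSemiregularRing R) (hnil : JacobsonNilpotent R) :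
    (∀ M : Ideal Rᵐᵒᵖ, M.IsMaximal → ∀ (s : S) (a b : R),
      MulOpposite.op (a * b) ∈ M ↔ MulOpposite.op (a * ω s b) ∈ M) ∧
    (∀ M : Ideal R, M.IsMaximal → ∀ (s : S) (a b : R),
      a * b ∈ M ↔ a * ω s b ∈ M) := by
  obtain ⟨hreg, hlift⟩ := hsr
  obtain ⟨n, hn, hl⟩ := hnil
  -- every element of the Jacobson radical is nilpotent
  have hJn : ∀ x ∈ (⊥ : Ideal R).jacobson, IsNilpotent x := by
    intro x hx
    refine ⟨n, ?_⟩
    have := hl (List.replicate n x) (by simp) (by intro y hy; rw [List.eq_of_mem_replicate hy]; exact hx)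
    rwa [List.prod_replicate] at this
  -- compatibility on the left factor
  have hinj : ∀ (s : S) (z : R), ω s z = 0 → z = 0 := by
    intro s z h
    have := (hcomp s 1 z).2 (by rw [one_mul, h])
    rwa [one_mul] at this
  have hcomp' : ∀ (s : S) (a b : R), a * b = 0 ↔ (ω s a) * b = 0 := by
    intro s a b
    constructor
    · intro h
      refine (hcomp s (ω s a) b).2 ?_
      rw [← map_mul, h, map_zero]
    · intro h
      have h2 : ω s a * ω s b = 0 := (hcomp s (ω s a) b).1 h
      rw [← map_mul] at h2
      exact hinj s _ h2
  -- transfer of hypotheses to the opposite ring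
  have hab' : ∀ e : Rᵐᵒᵖ, IsIdempotentElem e → ∀ a : Rᵐᵒᵖ, e * a = a * e := by
    intro e he a
    have h0 : IsIdempotentElem (unop e) := by
      have := congrArg unop he
      rwa [unop_mul] at this
    apply unop_injective
    rw [unop_mul, unop_mul]
    exact (hab _ h0 (unop a)).symm
  have hreg' : ∀ a : Rᵐᵒᵖ, ∃ b : Rᵐᵒᵖ, a - a * b * a ∈ (⊥ : Ideal Rᵐᵒᵖ).jacobson := by
    intro a
    obtain ⟨b, hb⟩ := hreg (unop a)
    refine ⟨op b, ?_⟩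
    have h : a - a * op b * a = op (unop a - unop a * b * unop a) := by
      apply unop_injective; simp [mul_assoc]
    rw [h]
    exact mem_jac_op_iff.2 hb
  have hlift' : ∀ a : Rᵐᵒᵖ, a * a - a ∈ (⊥ : Ideal Rᵐᵒᵖ).jacobson →
      ∃ e : Rᵐᵒᵖ, IsIdempotentElem e ∧ e - a ∈ (⊥ : Ideal Rᵐᵒᵖ).jacobson := by
    intro a ha
    have h : a * a - a = op (unop a * unop a - unop a) := by
      apply unop_injective; simp
    rw [h, mem_jac_op_iff] at ha
    obtain ⟨e, he, hea⟩ := hlift _ ha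
    refine ⟨op e, ?_, ?_⟩
    · show op e * op e = op e
      rw [← op_mul, he]
    · have h2 : op e - a = op (e - unop a) := by apply unop_injective; simp
      rw [h2]
      exact mem_jac_op_iff.2 hea
  have hJn' : ∀ x ∈ (⊥ : Ideal Rᵐᵒᵖ).jacobson, IsNilpotent x := by
    intro x hx
    have h : unop x ∈ (⊥ : Ideal R).jacobson := mem_jac_op_iff.1 (by rwa [op_unop])
    obtain ⟨k, hk⟩ := hJn _ h
    exact ⟨k, by rw [← op_unop x, ← op_pow, hk, op_zero]⟩
  constructor
  · -- maximal right ideals (ideals of Rᵐᵒᵖ)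
    intro M hM s a b
    have hσc : ∀ a' b' : Rᵐᵒᵖ, a' * b' = 0 ↔ a' * (RingHom.op (ω s)) b' = 0 := by
      intro a' b'
      rw [← op_unop a', ← op_unop b']
      show op (unop a') * op (unop b') = 0 ↔ op (unop a') * op (ω s (unop b')) = 0
      rw [← op_mul, ← op_mul, op_eq_zero_iff, op_eq_zero_iff]
      exact hcomp' s (unop b') (unop a')
    rw [op_mul, op_mul, max_prime hab' hreg' hlift' hM, max_prime hab' hreg' hlift' hM]
    have hfix := max_fix hab' hreg' hlift' hJn' (RingHom.op (ω s)) hσc hM (op b)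
    have hev : (RingHom.op (ω s)) (op b) = op (ω s b) := rfl
    rw [hev] at hfix
    exact or_congr_left hfix
  · intro M hM s a b
    rw [max_prime hab hreg hlift hM, max_prime hab hreg hlift hM]
    exact or_congr_right (max_fix hab hreg hlift hJn (ω s) (hcomp s) hM b)
end

section
/- Let Γ be a linearly ordered cancellative additive commutative monoid in which addition is strictly monotone, and let R be an abelian semi-regular ring with J(R) nilpotent. Let f and g be elements of the generalized power series ring R[[Γ]] (the Hahn series ring over Γ with coefficients in R) such that f g = 0 and g ≠ 0. If for every maximal right ideal M of R the set of coefficients { f(s) : s ∈ Γ } of f is not contained in M, then every coefficient of g lies in J(R). -/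
section Aux

variable {R : Type*} [Ring R]

/-- The Jacobson radical absorbs multiplication on the right (it is a two-sided ideal). -/
lemma AuxJac.mul_right {x : R} (hx : x ∈ (⊥ : Ideal R).jacobson) (r : R) :
    x * r ∈ (⊥ : Ideal R).jacobson := by
  rw [Ideal.mem_jacobson_iff] at hx ⊢
  intro y
  obtain ⟨z, hz⟩ := hx (r * y)
  rw [Ideal.mem_bot] at hz
  have key : z * (r * y) * x + z = 1 := by rwa [sub_eq_zero] at hz
  refine ⟨1 - y * x * z * r, ?_⟩
  rw [Ideal.mem_bot]
  calc (1 - y * x * z * r) * y * (x * r) + (1 - y * x * z * r) - 1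
      = y * x * r - y * x * (z * (r * y) * x + z) * r := by noncomm_ring
    _ = y * x * r - y * x * (1 : R) * r := by rw [key]
    _ = 0 := by noncomm_ring

/-- In an abelian semi-regular ring, `R/J(R)` is reduced. -/
lemma AuxJac.sq (hab : IsAbelianRing R) (hsr : IsSemiregularRing R) {x : R}
    (hx : x * x ∈ (⊥ : Ideal R).jacobson) : x ∈ (⊥ : Ideal R).jacobson := by
  obtain ⟨b, hb⟩ := hsr.1 x
  have hbx : b * x * (b * x) - b * x ∈ (⊥ : Ideal R).jacobson := by
    have := Ideal.mul_mem_left _ b hb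
    have h2 : b * (x - x * b * x) = -(b * x * (b * x) - b * x) := by noncomm_ring
    rw [h2] at this
    simpa using (⊥ : Ideal R).jacobson.neg_mem this
  obtain ⟨e, he, heb⟩ := hsr.2 (b * x) hbx
  have hex : e * x ∈ (⊥ : Ideal R).jacobson := by
    have h1 : (e - b * x) * x ∈ (⊥ : Ideal R).jacobson := AuxJac.mul_right heb x
    have h2 : b * (x * x) ∈ (⊥ : Ideal R).jacobson := Ideal.mul_mem_left _ b hx
    have h3 : e * x = (e - b * x) * x + b * (x * x) := by noncomm_ring
    rw [h3]; exact Submodule.add_mem _ h1 h2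
  have hxe : x - x * e ∈ (⊥ : Ideal R).jacobson := by
    have h1 : x * (e - b * x) ∈ (⊥ : Ideal R).jacobson := Ideal.mul_mem_left _ x heb
    have h2 : x - x * e = (x - x * b * x) - x * (e - b * x) := by noncomm_ring
    rw [h2]
    exact Submodule.sub_mem _ hb h1
  have hcomm : e * x = x * e := hab e he x
  have : x = (x - x * e) + e * x := by rw [hcomm]; abel
  rw [this]
  exact Submodule.add_mem _ hxe hex

lemma AuxJac.comm (hab : IsAbelianRing R) (hsr : IsSemiregularRing R) {a b : R}
    (h : a * b ∈ (⊥ : Ideal R).jacobson) : b * a ∈ (⊥ : Ideal R).jacobson := by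
  apply AuxJac.sq hab hsr
  have h1 : b * (a * b) * a ∈ (⊥ : Ideal R).jacobson :=
    AuxJac.mul_right (Ideal.mul_mem_left _ b h) a
  simpa [mul_assoc] using h1

lemma AuxJac.mid (hab : IsAbelianRing R) (hsr : IsSemiregularRing R) {a b : R}
    (h : a * b ∈ (⊥ : Ideal R).jacobson) (r : R) :
    a * r * b ∈ (⊥ : Ideal R).jacobson := by
  apply AuxJac.sq hab hsr
  have h1 : b * a ∈ (⊥ : Ideal R).jacobson := AuxJac.comm hab hsr h
  have h2 : (a * r) * ((b * a) * (r * b)) ∈ (⊥ : Ideal R).jacobson :=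
    Ideal.mul_mem_left _ _ (AuxJac.mul_right h1 (r * b))
  simpa [mul_assoc] using h2

/-- The key finite combinatorial lemma: if a sum of products lies in `J` and all "earlier times
later" cross products lie in `J`, then every diagonal product lies in `J`. -/
lemma AuxJac.sum_lemma (hab : IsAbelianRing R) (hsr : IsSemiregularRing R)
    {ι γ : Type*} [LinearOrder γ] (key : ι → γ) (s : Finset ι) (a b : ι → R)
    (hinj : ∀ i ∈ s, ∀ j ∈ s, key i = key j → i = j)
    (hcross : ∀ i ∈ s, ∀ j ∈ s, key i < key j → a i * b j ∈ (⊥ : Ideal R).jacobson)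
    (hsum : (∑ i ∈ s, a i * b i) ∈ (⊥ : Ideal R).jacobson) :
    ∀ i ∈ s, a i * b i ∈ (⊥ : Ideal R).jacobson := by
  classical
  induction s using Finset.strongInduction with
  | _ s ih =>
    intro i hi
    obtain ⟨i₀, hi₀, hmin⟩ := Finset.exists_min_image s key ⟨i, hi⟩
    have key0 : ∀ j ∈ s, j ≠ i₀ → a i₀ * b j ∈ (⊥ : Ideal R).jacobson := by
      intro j hj hne
      refine hcross i₀ hi₀ j hj (lt_of_le_of_ne (hmin j hj) ?_)
      exact fun hkey => hne (hinj j hj i₀ hi₀ hkey.symm)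
    have h1 : (∑ j ∈ s, a j * b j * a i₀) ∈ (⊥ : Ideal R).jacobson := by
      have := AuxJac.mul_right hsum (a i₀)
      rwa [Finset.sum_mul] at this
    have h2 : ∀ j ∈ s.erase i₀, a j * b j * a i₀ ∈ (⊥ : Ideal R).jacobson := by
      intro j hj
      obtain ⟨hne, hjs⟩ := Finset.mem_erase.mp hj
      have hba : b j * a i₀ ∈ (⊥ : Ideal R).jacobson :=
        AuxJac.comm hab hsr (key0 j hjs hne)
      simpa [mul_assoc] using Ideal.mul_mem_left _ (a j) hba
    have hsplit : (∑ j ∈ s, a j * b j * a i₀) =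
        a i₀ * b i₀ * a i₀ + ∑ j ∈ s.erase i₀, a j * b j * a i₀ :=
      (Finset.add_sum_erase s _ hi₀).symm
    have h3 : a i₀ * b i₀ * a i₀ ∈ (⊥ : Ideal R).jacobson := by
      have hrest : (∑ j ∈ s.erase i₀, a j * b j * a i₀) ∈ (⊥ : Ideal R).jacobson :=
        Ideal.sum_mem _ h2
      have : a i₀ * b i₀ * a i₀ =
          (∑ j ∈ s, a j * b j * a i₀) - ∑ j ∈ s.erase i₀, a j * b j * a i₀ := by
        rw [hsplit]; abel
      rw [this]; exact Submodule.sub_mem _ h1 hrest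
    have hba : b i₀ * a i₀ ∈ (⊥ : Ideal R).jacobson := by
      apply AuxJac.sq hab hsr
      simpa [mul_assoc] using Ideal.mul_mem_left _ (b i₀) h3
    have h00 : a i₀ * b i₀ ∈ (⊥ : Ideal R).jacobson := by
      apply AuxJac.sq hab hsr
      simpa [mul_assoc] using Ideal.mul_mem_left _ (a i₀) (AuxJac.mul_right hba (b i₀))
    by_cases hii : i = i₀
    · rwa [hii]
    · have hrest : (∑ j ∈ s.erase i₀, a j * b j) ∈ (⊥ : Ideal R).jacobson := by
        have hs : (∑ j ∈ s, a j * b j) = a i₀ * b i₀ + ∑ j ∈ s.erase i₀, a j * b j :=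
          (Finset.add_sum_erase s _ hi₀).symm
        have : (∑ j ∈ s.erase i₀, a j * b j) =
            (∑ j ∈ s, a j * b j) - a i₀ * b i₀ := by rw [hs]; abel
        rw [this]; exact Submodule.sub_mem _ hsum h00
      exact ih (s.erase i₀) (Finset.erase_ssubset hi₀)
        (fun p hp q hq => hinj p (Finset.mem_of_mem_erase hp) q (Finset.mem_of_mem_erase hq))
        (fun p hp q hq => hcross p (Finset.mem_of_mem_erase hp) q (Finset.mem_of_mem_erase hq))
        hrest i (Finset.mem_erase.mpr ⟨hii, hi⟩)

end Aux

open Pointwise in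
/-- McCoy-type lemma: over a ring which is reduced mod `J`, `f * g = 0` forces all products of
coefficients into `J`. -/
lemma AuxJac.mccoy {Γ R : Type*} [AddCommMonoid Γ] [LinearOrder Γ] [IsOrderedCancelAddMonoid Γ] [Ring R]
    (hab : IsAbelianRing R) (hsr : IsSemiregularRing R)
    (f g : HahnSeries Γ R) (hfg : f * g = 0) :
    ∀ s t : Γ, f.coeff s * g.coeff t ∈ (⊥ : Ideal R).jacobson := by
  by_contra hcon
  push_neg at hcon
  obtain ⟨s₀, t₀, h₀⟩ := hcon
  set T : Set Γ := {m | ∃ u v, u + v = m ∧ f.coeff u * g.coeff v ∉ (⊥ : Ideal R).jacobson} with hT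
  have hTsub : T ⊆ f.support + g.support := by
    rintro m ⟨u, v, huv, hprod⟩
    have hu : f.coeff u ≠ 0 := fun h => hprod (by simp [h])
    have hv : g.coeff v ≠ 0 := fun h => hprod (by simp [h])
    exact ⟨u, hu, v, hv, huv⟩
  have hwf : T.IsWF := ((f.isPWO_support.add g.isPWO_support).isWF).mono hTsub
  have hne : T.Nonempty := ⟨s₀ + t₀, s₀, t₀, rfl, h₀⟩
  obtain ⟨u, v, huv, hprod⟩ := hwf.min_mem hne
  set m := hwf.min hne with hm
  have hu : f.coeff u ≠ 0 := fun h => hprod (by simp [h])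
  have hv : g.coeff v ≠ 0 := fun h => hprod (by simp [h])
  have hmem : (u, v) ∈ Finset.addAntidiagonal f.isPWO_support g.isPWO_support m :=
    Finset.mem_addAntidiagonal.mpr ⟨hu, hv, huv⟩
  have hsum : (∑ ij ∈ Finset.addAntidiagonal f.isPWO_support g.isPWO_support m,
      f.coeff ij.1 * g.coeff ij.2) ∈ (⊥ : Ideal R).jacobson := by
    change (f * g).coeff m ∈ _
    rw [hfg]
    simp
  have hinj : ∀ p ∈ Finset.addAntidiagonal f.isPWO_support g.isPWO_support m,
      ∀ q ∈ Finset.addAntidiagonal f.isPWO_support g.isPWO_support m,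
      (p.1 : Γ) = q.1 → p = q := by
    intro p hp q hq hpq
    obtain ⟨-, -, hp3⟩ := Finset.mem_addAntidiagonal.mp hp
    obtain ⟨-, -, hq3⟩ := Finset.mem_addAntidiagonal.mp hq
    have : p.2 = q.2 := by
      apply add_left_cancel (a := p.1)
      rw [hp3, hpq, hq3]
    exact Prod.ext hpq this
  have hcross : ∀ p ∈ Finset.addAntidiagonal f.isPWO_support g.isPWO_support m,
      ∀ q ∈ Finset.addAntidiagonal f.isPWO_support g.isPWO_support m,
      (p.1 : Γ) < q.1 → f.coeff p.1 * g.coeff q.2 ∈ (⊥ : Ideal R).jacobson := by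
    intro p hp q hq hlt
    obtain ⟨-, -, hq3⟩ := Finset.mem_addAntidiagonal.mp hq
    by_contra hnot
    have hmemT : p.1 + q.2 ∈ T := ⟨p.1, q.2, rfl, hnot⟩
    have hltm : p.1 + q.2 < m := by
      calc p.1 + q.2 < q.1 + q.2 := add_lt_add_of_lt_of_le hlt le_rfl
        _ = m := hq3
    exact hwf.not_lt_min hne hmemT hltm
  have := AuxJac.sum_lemma hab hsr (Prod.fst : Γ × Γ → Γ)
    (Finset.addAntidiagonal f.isPWO_support g.isPWO_support m)
    (fun p => f.coeff p.1) (fun p => g.coeff p.2) hinj hcross hsum (u, v) hmem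
  exact hprod this

/-- Let `Γ` be a linearly ordered, cancellative, strictly monotone additive commutative
monoid and `R` an abelian semi-regular ring with `J(R)` nilpotent.  If `f * g = 0` with
`g ≠ 0` in the generalized power series (Hahn series) ring `R[[Γ]]`, and the set of
coefficients of `f` is not contained in any maximal right ideal of `R`, then every
coefficient of `g` lies in `J(R)`. -/
theorem coeff_mem_jacobson_of_mul_eq_zero (Γ R : Type*)
    [AddCommMonoid Γ] [LinearOrder Γ] [IsOrderedCancelAddMonoid Γ] [Ring R]
    (hab : IsAbelianRing R) (hsr : IsSemiregularRing R) (hnil : JacobsonNilpotent R)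
    (f g : HahnSeries Γ R) (hfg : f * g = 0) (hg : g ≠ 0)
    (hf : ∀ M : Ideal Rᵐᵒᵖ, M.IsMaximal → ¬ (∀ s : Γ, MulOpposite.op (f.coeff s) ∈ M)) :
    ∀ s : Γ, g.coeff s ∈ (⊥ : Ideal R).jacobson := by
  intro t
  have hJ : ∀ s : Γ, f.coeff s * g.coeff t ∈ (⊥ : Ideal R).jacobson :=
    fun s => AuxJac.mccoy hab hsr f g hfg s t
  set I : Ideal Rᵐᵒᵖ := Ideal.span (Set.range fun s : Γ => MulOpposite.op (f.coeff s)) with hI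
  have htop : I = ⊤ := by
    by_contra h
    obtain ⟨M, hM, hle⟩ := Ideal.exists_le_maximal I h
    exact hf M hM fun s => hle (Ideal.subset_span ⟨s, rfl⟩)
  have h1 : (1 : Rᵐᵒᵖ) ∈ I := htop ▸ Submodule.mem_top
  rw [hI, Ideal.span, Finsupp.mem_span_range_iff_exists_finsupp] at h1
  obtain ⟨c, hc⟩ := h1
  have hc' : (∑ i ∈ c.support, f.coeff i * (c i).unop) = 1 := by
    have := congrArg MulOpposite.unop hc
    rw [Finsupp.sum] at this
    simpa using this
  have : g.coeff t = ∑ i ∈ c.support, f.coeff i * (c i).unop * g.coeff t := by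
    rw [← Finset.sum_mul, hc', one_mul]
  rw [this]
  exact Ideal.sum_mem _ fun i _ => AuxJac.mid hab hsr (hJ i) ((c i).unop)
end

section
/- Let G be a linearly ordered additive commutative group and let R be an abelian semi-regular ring with J(R) nilpotent. Then the Malcev-Neumann series ring R((G)) (the Hahn series ring over G with coefficients in R) is McCoy over R: whenever f, g are non-zero elements of R((G)) with f g = 0, there exists a non-zero element c ∈ R with f · c = 0, and there exists a non-zero element d ∈ R with d · g = 0. -/
namespace McCoyAux

variable {R : Type*} [Ring R]

/-- Bundled hypotheses for the core argument: `S` is a two-sided "radical" set,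
`E a` is a central idempotent attached to `a` with `E a ≡ a * C a ≡ C a * a` and
`E a * a ≡ a` modulo `S`, and products of `n` elements of `S` vanish. -/
structure Setup (S : Set R) (E C : R → R) (n : ℕ) : Prop where
  zero_mem : (0 : R) ∈ S
  add_mem : ∀ {x y : R}, x ∈ S → y ∈ S → x + y ∈ S
  neg_mem : ∀ {x : R}, x ∈ S → -x ∈ S
  smul_left : ∀ (r : R) {x : R}, x ∈ S → r * x ∈ S
  smul_right : ∀ {x : R} (r : R), x ∈ S → x * r ∈ S
  idem : ∀ a : R, IsIdempotentElem (E a)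
  central : ∀ a r : R, E a * r = r * E a
  e_sub_ac : ∀ a : R, E a - a * C a ∈ S
  e_sub_ca : ∀ a : R, E a - C a * a ∈ S
  ea_sub_a : ∀ a : R, E a * a - a ∈ S
  prod_eq_zero : ∀ l : List R, l.length = n → (∀ x ∈ l, x ∈ S) → l.prod = 0

variable {S : Set R} {E C : R → R} {n : ℕ}

theorem Setup.sub_mem (h : Setup S E C n) {x y : R} (hx : x ∈ S) (hy : y ∈ S) : x - y ∈ S := by
  rw [sub_eq_add_neg]; exact h.add_mem hx (h.neg_mem hy)

theorem Setup.a_sub_ea (h : Setup S E C n) (a : R) : a - E a * a ∈ S := by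
  have := h.neg_mem (h.ea_sub_a a); rwa [neg_sub] at this

theorem Setup.central_list (h : Setup S E C n) (a : R) (l : List R) :
    E a * l.prod = l.prod * E a := by
  induction l with
  | nil => simp
  | cons y l ih => rw [List.prod_cons, ← mul_assoc, h.central a y, mul_assoc, ih, ← mul_assoc]

theorem Setup.long_prod_eq_zero (h : Setup S E C n) (l : List R) (hlen : n ≤ l.length)
    (hmem : ∀ x ∈ l, x ∈ S) : l.prod = 0 := by
  have h1 : (l.take n).prod * (l.drop n).prod = l.prod := List.prod_take_mul_prod_drop _ _
  have h2 : (l.take n).prod = 0 :=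
    h.prod_eq_zero _ (by rw [List.length_take]; omega)
      (fun x hx => hmem x (List.take_subset _ _ hx))
  rw [← h1, h2, zero_mul]

/-- Additive subgroup generated by `ω * β t` where `ω` is a product of `ℓ` elements of `S`. -/
def PR (S : Set R) (β : G → R) (ℓ : ℕ) : AddSubgroup R :=
  AddSubgroup.closure
    {x | ∃ (l : List R) (t : G), l.length = ℓ ∧ (∀ y ∈ l, y ∈ S) ∧ x = l.prod * β t}

/-- Mirror version: `α s * ω`. -/
def PL (S : Set R) (α : G → R) (ℓ : ℕ) : AddSubgroup R :=
  AddSubgroup.closure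
    {x | ∃ (s : G) (l : List R), l.length = ℓ ∧ (∀ y ∈ l, y ∈ S) ∧ x = α s * l.prod}

theorem mem_PR_gen {β : G → R} {ℓ : ℕ} {l : List R} (hlen : l.length = ℓ)
    (hmem : ∀ y ∈ l, y ∈ S) (t : G) : l.prod * β t ∈ PR S β ℓ :=
  AddSubgroup.subset_closure ⟨l, t, hlen, hmem, rfl⟩

theorem mem_PR_single {β : G → R} {j : R} (hj : j ∈ S) (t : G) : j * β t ∈ PR S β 1 := by
  have : j * β t = [j].prod * β t := by simp
  rw [this]; exact mem_PR_gen (by simp) (by simpa using hj) t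

theorem mem_PL_gen {α : G → R} {ℓ : ℕ} {l : List R} (hlen : l.length = ℓ)
    (hmem : ∀ y ∈ l, y ∈ S) (s : G) : α s * l.prod ∈ PL S α ℓ :=
  AddSubgroup.subset_closure ⟨s, l, hlen, hmem, rfl⟩

theorem mem_PL_single {α : G → R} {j : R} (hj : j ∈ S) (s : G) : α s * j ∈ PL S α 1 := by
  have : α s * j = α s * [j].prod := by simp
  rw [this]; exact mem_PL_gen (by simp) (by simpa using hj) s

/-- `P ℓ` is stable under arbitrary left multiplication for `ℓ ≥ 1`. -/
theorem PR_mul_left (h : Setup S E C n) {β : G → R} {ℓ : ℕ} (hℓ : 1 ≤ ℓ) (r : R) :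
    ∀ x ∈ PR S β ℓ, r * x ∈ PR S β ℓ := by
  have hle : PR S β ℓ ≤ (PR S β ℓ).comap (AddMonoidHom.mulLeft r) := by
    rw [PR, AddSubgroup.closure_le]
    rintro x ⟨l, t, hlen, hmem, rfl⟩
    simp only [SetLike.mem_coe, AddSubgroup.mem_comap, AddMonoidHom.coe_mulLeft]
    cases l with
    | nil => exact absurd hlen (by simp; omega)
    | cons y l' =>
      have heq : r * ((y :: l').prod * β t) = ((r * y) :: l').prod * β t := by
        simp [List.prod_cons, mul_assoc]
      rw [heq]
      exact mem_PR_gen (by simpa using hlen)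
        (by
          intro z hz
          rcases List.mem_cons.1 hz with h1 | h2
          · subst h1; exact h.smul_left r (hmem y (List.mem_cons_self))
          · exact hmem z (List.mem_cons_of_mem _ h2)) t
  intro x hx
  exact hle hx

/-- `P ℓ` absorbs a left factor from `S`, increasing the level. -/
theorem PR_cons (h : Setup S E C n) {β : G → R} {ℓ : ℕ} {j : R} (hj : j ∈ S) :
    ∀ x ∈ PR S β ℓ, j * x ∈ PR S β (ℓ + 1) := by
  have hle : PR S β ℓ ≤ (PR S β (ℓ + 1)).comap (AddMonoidHom.mulLeft j) := by
    rw [PR, AddSubgroup.closure_le]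
    rintro x ⟨l, t, hlen, hmem, rfl⟩
    simp only [SetLike.mem_coe, AddSubgroup.mem_comap, AddMonoidHom.coe_mulLeft]
    have heq : j * (l.prod * β t) = ((j :: l)).prod * β t := by
      simp [List.prod_cons, mul_assoc]
    rw [heq]
    exact mem_PR_gen (by simp [hlen]) (by
      intro z hz
      rcases List.mem_cons.1 hz with h1 | h2
      · subst h1; exact hj
      · exact hmem z h2) t
  intro x hx; exact hle hx

theorem PR_list_mul (h : Setup S E C n) {β : G → R} {ℓ : ℕ} (l₀ : List R)
    (hmem : ∀ y ∈ l₀, y ∈ S) : ∀ x ∈ PR S β ℓ, l₀.prod * x ∈ PR S β (l₀.length + ℓ) := by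
  induction l₀ with
  | nil => intro x hx; simpa using hx
  | cons y l' ih =>
    intro x hx
    have h1 : l'.prod * x ∈ PR S β (l'.length + ℓ) :=
      ih (fun z hz => hmem z (List.mem_cons_of_mem _ hz)) x hx
    have h2 : y * (l'.prod * x) ∈ PR S β (l'.length + ℓ + 1) :=
      PR_cons h (hmem y (List.mem_cons_self)) _ h1
    have heq : (y :: l').prod * x = y * (l'.prod * x) := by simp [List.prod_cons, mul_assoc]
    have hidx : (y :: l').length + ℓ = l'.length + ℓ + 1 := by simp; omega
    rw [heq, hidx]
    exact h2

theorem PR_death (h : Setup S E C n) {β : G → R} {ℓ : ℕ} (hℓ : n ≤ ℓ) :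
    ∀ x ∈ PR S β ℓ, x = 0 := by
  have hle : PR S β ℓ ≤ ⊥ := by
    rw [PR, AddSubgroup.closure_le]
    rintro x ⟨l, t, hlen, hmem, rfl⟩
    simp only [SetLike.mem_coe, AddSubgroup.mem_bot]
    rw [h.long_prod_eq_zero l (by omega) hmem, zero_mul]
  intro x hx
  simpa using hle hx

/-- Multiplication by a central idempotent raises the level, provided level-one holds. -/
theorem PR_e_mul (h : Setup S E C n) {β : G → R} {a : R}
    (h1 : ∀ t : G, E a * β t ∈ PR S β 1) {ℓ : ℕ} :
    ∀ x ∈ PR S β ℓ, E a * x ∈ PR S β (ℓ + 1) := by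
  have hle : PR S β ℓ ≤ (PR S β (ℓ + 1)).comap (AddMonoidHom.mulLeft (E a)) := by
    rw [PR, AddSubgroup.closure_le]
    rintro x ⟨l, t, hlen, hmem, rfl⟩
    simp only [SetLike.mem_coe, AddSubgroup.mem_comap, AddMonoidHom.coe_mulLeft]
    have heq : E a * (l.prod * β t) = l.prod * (E a * β t) := by
      rw [← mul_assoc, h.central_list a l, mul_assoc]
    rw [heq]
    have := PR_list_mul h l hmem _ (h1 t)
    rwa [hlen] at this
  intro x hx; exact hle hx

theorem PL_mul_right (h : Setup S E C n) {α : G → R} {ℓ : ℕ} (hℓ : 1 ≤ ℓ) (r : R) :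
    ∀ x ∈ PL S α ℓ, x * r ∈ PL S α ℓ := by
  have hle : PL S α ℓ ≤ (PL S α ℓ).comap (AddMonoidHom.mulRight r) := by
    rw [PL, AddSubgroup.closure_le]
    rintro x ⟨s, l, hlen, hmem, rfl⟩
    simp only [SetLike.mem_coe, AddSubgroup.mem_comap, AddMonoidHom.coe_mulRight]
    rcases List.eq_nil_or_concat l with hnil | ⟨l', y, rfl⟩
    · subst hnil; exact absurd hlen (by simp; omega)
    · simp only [List.concat_eq_append] at hlen hmem ⊢
      have heq : α s * (l' ++ [y]).prod * r = α s * (l' ++ [y * r]).prod := by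
        simp [List.prod_append, mul_assoc]
      rw [heq]
      exact mem_PL_gen (by simpa using hlen)
        (by
          intro z hz
          rcases List.mem_append.1 hz with h1 | h2
          · exact hmem z (List.mem_append.2 (Or.inl h1))
          · have : z = y * r := by simpa using h2
            subst this
            exact h.smul_right r (hmem y (by simp))) s
  intro x hx; exact hle hx

theorem PL_concat (h : Setup S E C n) {α : G → R} {ℓ : ℕ} {j : R} (hj : j ∈ S) :
    ∀ x ∈ PL S α ℓ, x * j ∈ PL S α (ℓ + 1) := by
  have hle : PL S α ℓ ≤ (PL S α (ℓ + 1)).comap (AddMonoidHom.mulRight j) := by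
    rw [PL, AddSubgroup.closure_le]
    rintro x ⟨s, l, hlen, hmem, rfl⟩
    simp only [SetLike.mem_coe, AddSubgroup.mem_comap, AddMonoidHom.coe_mulRight]
    have heq : α s * l.prod * j = α s * (l ++ [j]).prod := by
      simp [List.prod_append, mul_assoc]
    rw [heq]
    exact mem_PL_gen (by simp [hlen]) (by
      intro z hz
      rcases List.mem_append.1 hz with h1 | h2
      · exact hmem z h1
      · have : z = j := by simpa using h2
        subst this; exact hj) s
  intro x hx; exact hle hx

theorem PL_list_mul (h : Setup S E C n) {α : G → R} (l₀ : List R)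
    (hmem : ∀ y ∈ l₀, y ∈ S) :
    ∀ (ℓ : ℕ), ∀ x ∈ PL S α ℓ, x * l₀.prod ∈ PL S α (ℓ + l₀.length) := by
  induction l₀ with
  | nil => intro ℓ x hx; simpa using hx
  | cons y l' ih =>
    intro ℓ x hx
    have h2 : x * y ∈ PL S α (ℓ + 1) := PL_concat h (hmem y (List.mem_cons_self)) x hx
    have h3 : (x * y) * l'.prod ∈ PL S α (ℓ + 1 + l'.length) :=
      ih (fun z hz => hmem z (List.mem_cons_of_mem _ hz)) _ _ h2
    have heq : x * (y :: l').prod = (x * y) * l'.prod := by simp [List.prod_cons, mul_assoc]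
    have hidx : ℓ + (y :: l').length = ℓ + 1 + l'.length := by simp; omega
    rw [heq, hidx]
    exact h3

theorem PL_death (h : Setup S E C n) {α : G → R} {ℓ : ℕ} (hℓ : n ≤ ℓ) :
    ∀ x ∈ PL S α ℓ, x = 0 := by
  have hle : PL S α ℓ ≤ ⊥ := by
    rw [PL, AddSubgroup.closure_le]
    rintro x ⟨s, l, hlen, hmem, rfl⟩
    simp only [SetLike.mem_coe, AddSubgroup.mem_bot]
    rw [h.long_prod_eq_zero l (by omega) hmem, mul_zero]
  intro x hx
  simpa using hle hx

theorem PL_e_mul (h : Setup S E C n) {α : G → R} {a : R}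
    (h1 : ∀ s : G, α s * E a ∈ PL S α 1) {ℓ : ℕ} :
    ∀ x ∈ PL S α ℓ, x * E a ∈ PL S α (ℓ + 1) := by
  have hle : PL S α ℓ ≤ (PL S α (ℓ + 1)).comap (AddMonoidHom.mulRight (E a)) := by
    rw [PL, AddSubgroup.closure_le]
    rintro x ⟨s, l, hlen, hmem, rfl⟩
    simp only [SetLike.mem_coe, AddSubgroup.mem_comap, AddMonoidHom.coe_mulRight]
    have heq : α s * l.prod * E a = (α s * E a) * l.prod := by
      rw [mul_assoc, ← h.central_list a l, ← mul_assoc]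
    rw [heq]
    have := PL_list_mul h l hmem _ _ (h1 s)
    rwa [hlen, Nat.add_comm] at this
  intro x hx; exact hle hx

section Hahn

variable {G' : Type*} [AddCommGroup G'] [LinearOrder G'] [IsOrderedAddMonoid G']

/-- Key claim: if `f * g = 0`, then for every coefficient `a` of `f` not in `S`, the
central idempotent `E a` annihilates every coefficient of `g`. -/
theorem claimU (h : Setup S E C n) (f g : HahnSeries G' R) (hfg : f * g = 0) :
    ∀ s : G', f.coeff s ∉ S → ∀ t : G', E (f.coeff s) * g.coeff t = 0 := by
  classical
  by_contra hcon
  push_neg at hcon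
  set Bad : Set G' := {s | f.coeff s ∉ S ∧ ∃ t, E (f.coeff s) * g.coeff t ≠ 0} with hBad
  have hBadsub : Bad ⊆ f.support := by
    rintro s ⟨hs1, -⟩ 
    intro h0
    exact hs1 (by rw [h0]; exact h.zero_mem)
  have hBadWF : Bad.IsWF := f.isWF_support.mono hBadsub
  have hBadne : Bad.Nonempty := by
    obtain ⟨s, hs1, t, ht⟩ := hcon
    exact ⟨s, hs1, t, ht⟩
  set sm := hBadWF.min hBadne with hsm
  obtain ⟨hsmS, tbad, htbad⟩ := hBadWF.min_mem hBadne
  set a := f.coeff sm with ha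
  set e := E a with he
  -- row induction hypothesis
  have rowIH : ∀ s' : G', s' < sm → f.coeff s' ∉ S → ∀ t, E (f.coeff s') * g.coeff t = 0 := by
    intro s' hlt hs' t
    by_contra hne0
    exact hBadWF.not_lt_min hBadne ⟨hs', t, hne0⟩ hlt
  -- step 1 : every `e * g.coeff t` lies in `PR S g.coeff 1`
  have step1 : ∀ t : G', e * g.coeff t ∈ PR S g.coeff 1 := by
    by_contra hcon2
    push_neg at hcon2
    set BadT : Set G' := {t | e * g.coeff t ∉ PR S g.coeff 1} with hBadT
    have hBadTsub : BadT ⊆ g.support := by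
      intro t ht h0
      exact ht (by rw [h0, mul_zero]; exact (PR S g.coeff 1).zero_mem)
    have hBadTWF : BadT.IsWF := g.isWF_support.mono hBadTsub
    have hBadTne : BadT.Nonempty := hcon2
    set t0 := hBadTWF.min hBadTne with ht0
    have ht0mem : e * g.coeff t0 ∉ PR S g.coeff 1 := hBadTWF.min_mem hBadTne
    have innerIH : ∀ t' : G', t' < t0 → e * g.coeff t' ∈ PR S g.coeff 1 := by
      intro t' hlt
      by_contra hne0
      exact hBadTWF.not_lt_min hBadTne hne0 hlt
    -- the convolution identity at `sm + t0`
    have hw : (f * g).coeff (sm + t0) = 0 := by rw [hfg]; simp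
    rw [HahnSeries.coeff_mul] at hw
    set A := Finset.antidiagonal f.isPWO_support g.isPWO_support (sm + t0) with hA
    have hsmsupp : sm ∈ f.support := hBadsub (hBadWF.min_mem hBadne)
    have ht0supp : t0 ∈ g.support := hBadTsub (hBadTWF.min_mem hBadTne)
    have hp0 : ((sm, t0) : G' × G') ∈ A :=
      Finset.mem_addAntidiagonal.2 ⟨hsmsupp, ht0supp, rfl⟩
    have hsum : ∑ ij ∈ A, e * (f.coeff ij.1 * g.coeff ij.2) = 0 := by
      rw [← Finset.mul_sum, hw, mul_zero]
    have hkey : e * (f.coeff sm * g.coeff t0)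
        = - ∑ ij ∈ A.erase (sm, t0), e * (f.coeff ij.1 * g.coeff ij.2) := by
      have h2 := Finset.add_sum_erase A (fun ij => e * (f.coeff ij.1 * g.coeff ij.2)) hp0
      rw [hsum] at h2
      exact eq_neg_of_add_eq_zero_left h2
    have hterm : ∀ ij ∈ A.erase ((sm, t0) : G' × G'),
        e * (f.coeff ij.1 * g.coeff ij.2) ∈ PR S g.coeff 1 := by
      intro ij hij
      obtain ⟨hijne, hijA⟩ := Finset.mem_erase.1 hij
      obtain ⟨hij1, hij2, hijsum⟩ := Finset.mem_addAntidiagonal.1 hijA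
      rcases lt_trichotomy ij.1 sm with hlt | heq | hgt
      · by_cases hS2 : f.coeff ij.1 ∈ S
        · have heq2 : e * (f.coeff ij.1 * g.coeff ij.2)
              = (e * f.coeff ij.1) * g.coeff ij.2 := by rw [mul_assoc]
          rw [heq2]
          exact mem_PR_single (h.smul_left e hS2) ij.2
        · set a' := f.coeff ij.1 with ha'
          have hrow : E a' * g.coeff ij.2 = 0 := rowIH ij.1 hlt hS2 ij.2
          have hzero : (E a' * a') * g.coeff ij.2 = 0 := by
            rw [h.central a' a', mul_assoc, hrow, mul_zero]
          have hsplit : e * (a' * g.coeff ij.2)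
              = (e * (a' - E a' * a')) * g.coeff ij.2
                + e * ((E a' * a') * g.coeff ij.2) := by noncomm_ring
          rw [hsplit, hzero, mul_zero, add_zero]
          exact mem_PR_single (h.smul_left e (h.a_sub_ea a')) ij.2
      · exfalso
        apply hijne
        have : ij.2 = t0 := by
          have := hijsum
          rw [heq] at this
          exact add_left_cancel this
        exact Prod.ext heq this
      · have ht2 : ij.2 < t0 := by
          by_contra hge
          push_neg at hge
          have : sm + t0 < ij.1 + ij.2 :=
            add_lt_add_of_lt_of_le hgt hge
          rw [hijsum] at this
          exact lt_irrefl _ this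
        have hIH : e * g.coeff ij.2 ∈ PR S g.coeff 1 := innerIH ij.2 ht2
        have heq2 : e * (f.coeff ij.1 * g.coeff ij.2)
            = f.coeff ij.1 * (e * g.coeff ij.2) := by
          rw [← mul_assoc, h.central a (f.coeff ij.1), mul_assoc]
        rw [heq2]
        exact PR_mul_left h le_rfl _ _ hIH
    have hin : e * (f.coeff sm * g.coeff t0) ∈ PR S g.coeff 1 := by
      rw [hkey]
      exact AddSubgroup.neg_mem _ (AddSubgroup.sum_mem _ hterm)
    -- extraction
    have h1 : (e * a) * g.coeff t0 ∈ PR S g.coeff 1 := by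
      rw [mul_assoc]; exact hin
    have h2 : a * g.coeff t0 ∈ PR S g.coeff 1 := by
      have hgen : (e * a - a) * g.coeff t0 ∈ PR S g.coeff 1 :=
        mem_PR_single (h.ea_sub_a a) t0
      have heq2 : a * g.coeff t0 = (e * a) * g.coeff t0 - (e * a - a) * g.coeff t0 := by
        noncomm_ring
      rw [heq2]
      exact AddSubgroup.sub_mem _ h1 hgen
    have h3 : C a * (a * g.coeff t0) ∈ PR S g.coeff 1 :=
      PR_mul_left h le_rfl _ _ h2
    have h4 : (e - C a * a) * g.coeff t0 ∈ PR S g.coeff 1 :=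
      mem_PR_single (h.e_sub_ca a) t0
    have heq3 : e * g.coeff t0 = (e - C a * a) * g.coeff t0 + C a * (a * g.coeff t0) := by
      noncomm_ring
    exact ht0mem (by rw [heq3]; exact AddSubgroup.add_mem _ h4 h3)
  -- step 2 : iterate to all levels
  have step2 : ∀ t : G', ∀ k : ℕ, e * g.coeff t ∈ PR S g.coeff (k + 1) := by
    intro t k
    induction k with
    | zero => exact step1 t
    | succ k ih =>
      have heq2 : e * g.coeff t = e * (e * g.coeff t) := by
        rw [← mul_assoc, (h.idem a)]
      rw [heq2]
      exact PR_e_mul h step1 _ ih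
  -- step 3 : kill
  rcases Nat.eq_zero_or_pos n with hn0 | hnpos
  · exact htbad (by
      have := h.prod_eq_zero [] (by simp [hn0]) (by simp)
      simp at this
      rw [← one_mul (e * g.coeff tbad), this, zero_mul])
  · have hmem2 : e * g.coeff tbad ∈ PR S g.coeff n := by
      have hst := step2 tbad (n - 1)
      have hidx : n - 1 + 1 = n := by omega
      rwa [hidx] at hst
    exact htbad (PR_death h le_rfl _ hmem2)

/-- Main right-annihilator lemma. -/
theorem main_right (h : Setup S E C n) (f g : HahnSeries G' R)
    (hfg : f * g = 0) (hg : g ≠ 0) : ∃ c : R, c ≠ 0 ∧ ∀ s : G', f.coeff s * c = 0 := by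
  classical
  obtain ⟨τ, hτ⟩ : ∃ t, g.coeff t ≠ 0 := HahnSeries.support_nonempty_iff.2 hg
  set D : ℕ → Prop := fun k => ∃ (l : List R) (t : G'),
    l.length = k ∧ (∀ y ∈ l, y ∈ S) ∧ l.prod * g.coeff t ≠ 0 with hD
  have hD0 : D 0 := ⟨[], τ, rfl, by simp, by simpa using hτ⟩
  have hDbound : ∀ k, n ≤ k → ¬ D k := by
    rintro k hk ⟨l, t, hlen, hmem, hne⟩
    exact hne (by rw [h.long_prod_eq_zero l (by omega) hmem, zero_mul])
  set d := Nat.findGreatest D n with hd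
  have hDd : D d := Nat.findGreatest_spec (Nat.zero_le n) hD0
  have hnotD : ¬ D (d + 1) := by
    by_cases hle : d + 1 ≤ n
    · exact Nat.findGreatest_is_greatest (by omega) hle
    · exact hDbound _ (by omega)
  obtain ⟨l₀, τ₀, hlen₀, hmem₀, hc⟩ := hDd
  refine ⟨l₀.prod * g.coeff τ₀, hc, fun s => ?_⟩
  have hK : ∀ j, j ∈ S → j * (l₀.prod * g.coeff τ₀) = 0 := by
    intro j hj
    by_contra hne
    apply hnotD
    refine ⟨j :: l₀, τ₀, by simp [hlen₀], ?_, ?_⟩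
    · intro z hz
      rcases List.mem_cons.1 hz with h1 | h2
      · subst h1; exact hj
      · exact hmem₀ z h2
    · rw [List.prod_cons, mul_assoc]; exact hne
  by_cases hS2 : f.coeff s ∈ S
  · rw [← mul_assoc]
    have := hK _ hS2
    rw [← mul_assoc] at this
    exact this
  · set a := f.coeff s with ha
    have hU : E a * g.coeff τ₀ = 0 := claimU h f g hfg s hS2 τ₀
    have h1 : (a - E a * a) * (l₀.prod * g.coeff τ₀) = 0 := by
      have := hK _ (h.a_sub_ea a)
      exact this
    have h2 : (E a * a) * (l₀.prod * g.coeff τ₀) = 0 := by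
      have hc1 : (E a * a) * (l₀.prod * g.coeff τ₀)
          = a * (l₀.prod * (E a * g.coeff τ₀)) := by
        rw [h.central a a]
        rw [mul_assoc, ← mul_assoc (E a), h.central_list a l₀, mul_assoc]
      rw [hc1, hU, mul_zero, mul_zero]
    have hsplit : a * (l₀.prod * g.coeff τ₀)
        = (a - E a * a) * (l₀.prod * g.coeff τ₀)
          + (E a * a) * (l₀.prod * g.coeff τ₀) := by noncomm_ring
    rw [← mul_assoc] at hsplit ⊢
    rw [hsplit, h1, h2, add_zero]

/-- Mirror key claim. -/
theorem claimU' (h : Setup S E C n) (f g : HahnSeries G' R) (hfg : f * g = 0) :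
    ∀ t : G', g.coeff t ∉ S → ∀ s : G', f.coeff s * E (g.coeff t) = 0 := by
  classical
  by_contra hcon
  push_neg at hcon
  set Bad : Set G' := {t | g.coeff t ∉ S ∧ ∃ s, f.coeff s * E (g.coeff t) ≠ 0} with hBad
  have hBadsub : Bad ⊆ g.support := by
    rintro t ⟨ht1, -⟩
    intro h0
    exact ht1 (by rw [h0]; exact h.zero_mem)
  have hBadWF : Bad.IsWF := g.isWF_support.mono hBadsub
  have hBadne : Bad.Nonempty := by
    obtain ⟨t, ht1, s, hs⟩ := hcon
    exact ⟨t, ht1, s, hs⟩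
  set tm := hBadWF.min hBadne with htm
  obtain ⟨htmS, sbad, hsbad⟩ := hBadWF.min_mem hBadne
  set b := g.coeff tm with hb
  set e := E b with he
  have rowIH : ∀ t' : G', t' < tm → g.coeff t' ∉ S → ∀ s, f.coeff s * E (g.coeff t') = 0 := by
    intro t' hlt ht' s
    by_contra hne0
    exact hBadWF.not_lt_min hBadne ⟨ht', s, hne0⟩ hlt
  have step1 : ∀ s : G', f.coeff s * e ∈ PL S f.coeff 1 := by
    by_contra hcon2
    push_neg at hcon2
    set BadS : Set G' := {s | f.coeff s * e ∉ PL S f.coeff 1} with hBadS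
    have hBadSsub : BadS ⊆ f.support := by
      intro s hs h0
      exact hs (by rw [h0, zero_mul]; exact (PL S f.coeff 1).zero_mem)
    have hBadSWF : BadS.IsWF := f.isWF_support.mono hBadSsub
    have hBadSne : BadS.Nonempty := hcon2
    set s0 := hBadSWF.min hBadSne with hs0
    have hs0mem : f.coeff s0 * e ∉ PL S f.coeff 1 := hBadSWF.min_mem hBadSne
    have innerIH : ∀ s' : G', s' < s0 → f.coeff s' * e ∈ PL S f.coeff 1 := by
      intro s' hlt
      by_contra hne0
      exact hBadSWF.not_lt_min hBadSne hne0 hlt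
    have hw : (f * g).coeff (s0 + tm) = 0 := by rw [hfg]; simp
    rw [HahnSeries.coeff_mul] at hw
    set A := Finset.antidiagonal f.isPWO_support g.isPWO_support (s0 + tm) with hA
    have hs0supp : s0 ∈ f.support := hBadSsub (hBadSWF.min_mem hBadSne)
    have htmsupp : tm ∈ g.support := hBadsub (hBadWF.min_mem hBadne)
    have hp0 : ((s0, tm) : G' × G') ∈ A :=
      Finset.mem_addAntidiagonal.2 ⟨hs0supp, htmsupp, rfl⟩
    have hsum : ∑ ij ∈ A, (f.coeff ij.1 * g.coeff ij.2) * e = 0 := by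
      rw [← Finset.sum_mul, hw, zero_mul]
    have hkey : (f.coeff s0 * g.coeff tm) * e
        = - ∑ ij ∈ A.erase (s0, tm), (f.coeff ij.1 * g.coeff ij.2) * e := by
      have h2 := Finset.add_sum_erase A (fun ij => (f.coeff ij.1 * g.coeff ij.2) * e) hp0
      rw [hsum] at h2
      exact eq_neg_of_add_eq_zero_left h2
    have hterm : ∀ ij ∈ A.erase ((s0, tm) : G' × G'),
        (f.coeff ij.1 * g.coeff ij.2) * e ∈ PL S f.coeff 1 := by
      intro ij hij
      obtain ⟨hijne, hijA⟩ := Finset.mem_erase.1 hij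
      obtain ⟨hij1, hij2, hijsum⟩ := Finset.mem_addAntidiagonal.1 hijA
      rcases lt_trichotomy ij.2 tm with hlt | heq | hgt
      · by_cases hS2 : g.coeff ij.2 ∈ S
        · have heq2 : (f.coeff ij.1 * g.coeff ij.2) * e
              = f.coeff ij.1 * (g.coeff ij.2 * e) := by rw [mul_assoc]
          rw [heq2]
          exact mem_PL_single (h.smul_right e hS2) ij.1
        · set b' := g.coeff ij.2 with hb'
          have hrow : f.coeff ij.1 * E b' = 0 := rowIH ij.2 hlt hS2 ij.1
          have hzero : (f.coeff ij.1 * (E b' * b')) * e = 0 := by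
            rw [← mul_assoc, hrow, zero_mul, zero_mul]
          have hsplit : (f.coeff ij.1 * b') * e
              = (f.coeff ij.1 * (b' - E b' * b')) * e
                + (f.coeff ij.1 * (E b' * b')) * e := by noncomm_ring
          rw [hsplit, hzero, add_zero, mul_assoc]
          exact mem_PL_single (h.smul_right e (h.a_sub_ea b')) ij.1
      · exfalso
        apply hijne
        have : ij.1 = s0 := by
          have h5 := hijsum
          rw [heq] at h5
          exact add_right_cancel h5
        exact Prod.ext this heq
      · have hs2 : ij.1 < s0 := by
          by_contra hge
          push_neg at hge
          have : s0 + tm < ij.1 + ij.2 :=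
            add_lt_add_of_le_of_lt hge hgt
          rw [hijsum] at this
          exact lt_irrefl _ this
        have hIH : f.coeff ij.1 * e ∈ PL S f.coeff 1 := innerIH ij.1 hs2
        have heq2 : (f.coeff ij.1 * g.coeff ij.2) * e
            = (f.coeff ij.1 * e) * g.coeff ij.2 := by
          rw [mul_assoc, ← h.central b (g.coeff ij.2), ← mul_assoc]
        rw [heq2]
        exact PL_mul_right h le_rfl _ _ hIH
    have hin : (f.coeff s0 * b) * e ∈ PL S f.coeff 1 := by
      rw [hkey]
      exact AddSubgroup.neg_mem _ (AddSubgroup.sum_mem _ hterm)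
    have hbe : b - b * e ∈ S := by
      have h6 := h.neg_mem (h.ea_sub_a b)
      rw [neg_sub, h.central b b] at h6
      exact h6
    have h2 : f.coeff s0 * b ∈ PL S f.coeff 1 := by
      have hgen : f.coeff s0 * (b - b * e) ∈ PL S f.coeff 1 :=
        mem_PL_single hbe s0
      have heq2 : f.coeff s0 * b
          = (f.coeff s0 * b) * e + f.coeff s0 * (b - b * e) := by noncomm_ring
      rw [heq2]
      exact AddSubgroup.add_mem _ hin hgen
    have h3 : (f.coeff s0 * b) * C b ∈ PL S f.coeff 1 :=
      PL_mul_right h le_rfl _ _ h2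
    have h4 : f.coeff s0 * (e - b * C b) ∈ PL S f.coeff 1 :=
      mem_PL_single (h.e_sub_ac b) s0
    have heq3 : f.coeff s0 * e
        = f.coeff s0 * (e - b * C b) + (f.coeff s0 * b) * C b := by noncomm_ring
    exact hs0mem (by rw [heq3]; exact AddSubgroup.add_mem _ h4 h3)
  have step2 : ∀ s : G', ∀ k : ℕ, f.coeff s * e ∈ PL S f.coeff (k + 1) := by
    intro s k
    induction k with
    | zero => exact step1 s
    | succ k ih =>
      have heq2 : f.coeff s * e = (f.coeff s * e) * e := by
        rw [mul_assoc, (h.idem b)]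
      rw [heq2]
      exact PL_e_mul h step1 _ ih
  rcases Nat.eq_zero_or_pos n with hn0 | hnpos
  · exact hsbad (by
      have h7 := h.prod_eq_zero [] (by simp [hn0]) (by simp)
      simp at h7
      rw [← mul_one (f.coeff sbad * e), h7, mul_zero])
  · have hmem2 : f.coeff sbad * e ∈ PL S f.coeff n := by
      have hst := step2 sbad (n - 1)
      have hidx : n - 1 + 1 = n := by omega
      rwa [hidx] at hst
    exact hsbad (PL_death h le_rfl _ hmem2)

/-- Main left-annihilator lemma. -/
theorem main_left (h : Setup S E C n) (f g : HahnSeries G' R)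
    (hfg : f * g = 0) (hf : f ≠ 0) : ∃ d : R, d ≠ 0 ∧ ∀ t : G', d * g.coeff t = 0 := by
  classical
  obtain ⟨σ, hσ⟩ : ∃ s, f.coeff s ≠ 0 := HahnSeries.support_nonempty_iff.2 hf
  set D : ℕ → Prop := fun k => ∃ (s : G') (l : List R),
    l.length = k ∧ (∀ y ∈ l, y ∈ S) ∧ f.coeff s * l.prod ≠ 0 with hD
  have hD0 : D 0 := ⟨σ, [], rfl, by simp, by simpa using hσ⟩
  have hDbound : ∀ k, n ≤ k → ¬ D k := by
    rintro k hk ⟨s, l, hlen, hmem, hne⟩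
    exact hne (by rw [h.long_prod_eq_zero l (by omega) hmem, mul_zero])
  set d := Nat.findGreatest D n with hd
  have hDd : D d := Nat.findGreatest_spec (Nat.zero_le n) hD0
  have hnotD : ¬ D (d + 1) := by
    by_cases hle : d + 1 ≤ n
    · exact Nat.findGreatest_is_greatest (by omega) hle
    · exact hDbound _ (by omega)
  obtain ⟨σ₀, l₀, hlen₀, hmem₀, hc⟩ := hDd
  refine ⟨f.coeff σ₀ * l₀.prod, hc, fun t => ?_⟩
  have hK : ∀ j, j ∈ S → (f.coeff σ₀ * l₀.prod) * j = 0 := by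
    intro j hj
    by_contra hne
    apply hnotD
    refine ⟨σ₀, l₀ ++ [j], by simp [hlen₀], ?_, ?_⟩
    · intro z hz
      rcases List.mem_append.1 hz with h1 | h2
      · exact hmem₀ z h1
      · have : z = j := by simpa using h2
        subst this; exact hj
    · rw [List.prod_append, List.prod_singleton, ← mul_assoc]; exact hne
  by_cases hS2 : g.coeff t ∈ S
  · exact hK _ hS2
  · set b := g.coeff t with hb
    have hU : f.coeff σ₀ * E b = 0 := claimU' h f g hfg t hS2 σ₀
    have h1 : (f.coeff σ₀ * l₀.prod) * (b - E b * b) = 0 := hK _ (h.a_sub_ea b)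
    have h2 : (f.coeff σ₀ * l₀.prod) * (E b * b) = 0 := by
      have hc1 : (f.coeff σ₀ * l₀.prod) * (E b * b)
          = ((f.coeff σ₀ * E b) * l₀.prod) * b := by
        simp only [← mul_assoc]
        rw [mul_assoc (f.coeff σ₀) l₀.prod (E b), ← h.central_list b l₀, ← mul_assoc]
      rw [hc1, hU, zero_mul, zero_mul]
    have hsplit : (f.coeff σ₀ * l₀.prod) * b
        = (f.coeff σ₀ * l₀.prod) * (b - E b * b)
          + (f.coeff σ₀ * l₀.prod) * (E b * b) := by noncomm_ring
    rw [hsplit, h1, h2, add_zero]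


end Hahn

end McCoyAux




/-- Let `G` be a linearly ordered additive commutative group and `R` an abelian semi-regular
ring with `J(R)` nilpotent.  Then the Malcev–Neumann series ring `R((G))` (Hahn series over
`G`) is McCoy over `R`: if `f * g = 0` with `f, g ≠ 0`, then some non-zero `c ∈ R`
annihilates `f` on the right and some non-zero `d ∈ R` annihilates `g` on the left. -/
theorem malcevNeumann_mccoy (G R : Type*)
    [AddCommGroup G] [LinearOrder G] [IsOrderedAddMonoid G] [Ring R]
    (hab : IsAbelianRing R) (hsr : IsSemiregularRing R) (hnil : JacobsonNilpotent R)
    (f g : HahnSeries G R) (hf : f ≠ 0) (hg : g ≠ 0) (hfg : f * g = 0) :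
    (∃ c : R, c ≠ 0 ∧ ∀ s : G, f.coeff s * c = 0) ∧
    (∃ d : R, d ≠ 0 ∧ ∀ s : G, d * g.coeff s = 0) := by
  classical
  obtain ⟨n, hn, hlist⟩ := hnil
  set J := (⊥ : Ideal R).jacobson with hJ
  -- J is closed under right multiplication
  have jr : ∀ (r : R) {x : R}, x ∈ J → x * r ∈ J := by
    intro r x hx
    exact Ideal.mul_mem_right r (⊥ : Ideal R).jacobson hx
  -- the idempotent-unit decomposition
  have hA3 : ∀ a : R, ∃ e c : R, IsIdempotentElem e ∧ (∀ r, e * r = r * e) ∧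
      e - a * c ∈ J ∧ e - c * a ∈ J ∧ e * a - a ∈ J := by
    intro a
    obtain ⟨b, hb⟩ := hsr.1 a
    have hp : (a * b) * (a * b) - a * b ∈ J := by
      have h1 : (a - a * b * a) * b ∈ J := jr _ hb
      have heq : (a * b) * (a * b) - a * b = -((a - a * b * a) * b) := by noncomm_ring
      rw [heq]; exact J.neg_mem h1
    obtain ⟨e₁, he₁, hc₁⟩ := hsr.2 (a * b) hp
    have hcen₁ : ∀ r, e₁ * r = r * e₁ := hab e₁ he₁
    have hq : (b * a) * (b * a) - b * a ∈ J := by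
      have h1 : b * (a - a * b * a) ∈ J := J.mul_mem_left b hb
      have heq : (b * a) * (b * a) - b * a = -(b * (a - a * b * a)) := by noncomm_ring
      rw [heq]; exact J.neg_mem h1
    obtain ⟨e₂, he₂, hc₂⟩ := hsr.2 (b * a) hq
    have hcen₂ : ∀ r, e₂ * r = r * e₂ := hab e₂ he₂
    have hi : e₁ * a - a ∈ J := by
      have h1 : (e₁ - a * b) * a ∈ J := jr _ hc₁
      have heq : e₁ * a - a = (e₁ - a * b) * a + -(a - a * b * a) := by noncomm_ring
      rw [heq]; exact J.add_mem h1 (J.neg_mem hb)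
    have hii : a * e₂ - a ∈ J := by
      have h1 : a * (e₂ - b * a) ∈ J := J.mul_mem_left a hc₂
      have heq : a * e₂ - a = a * (e₂ - b * a) + -(a - a * b * a) := by noncomm_ring
      rw [heq]; exact J.add_mem h1 (J.neg_mem hb)
    have h5 : e₂ - e₁ * e₂ ∈ J := by
      have h1 : e₂ - b * (e₁ * a) ∈ J := by
        have hx : b * (e₁ * a - a) ∈ J := J.mul_mem_left b hi
        have heq : e₂ - b * (e₁ * a) = (e₂ - b * a) + -(b * (e₁ * a - a)) := by noncomm_ring
        rw [heq]; exact J.add_mem hc₂ (J.neg_mem hx)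
      have h2 : b * (e₁ * a) = e₁ * (b * a) := by
        rw [← mul_assoc, ← hcen₁ b, mul_assoc]
      have h3 : e₂ - e₁ * (b * a) ∈ J := by rw [← h2]; exact h1
      have h4 : e₁ * (b * a) - e₁ * e₂ ∈ J := by
        have hx : e₁ * -(e₂ - b * a) ∈ J := J.mul_mem_left _ (J.neg_mem hc₂)
        have heq : e₁ * (b * a) - e₁ * e₂ = e₁ * -(e₂ - b * a) := by noncomm_ring
        rw [heq]; exact hx
      have heq : e₂ - e₁ * e₂ = (e₂ - e₁ * (b * a)) + (e₁ * (b * a) - e₁ * e₂) := by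
        noncomm_ring
      rw [heq]; exact J.add_mem h3 h4
    have h6 : e₁ - e₁ * e₂ ∈ J := by
      have k1 : e₁ - (a * e₂) * b ∈ J := by
        have hx : (a * e₂ - a) * b ∈ J := jr _ hii
        have heq : e₁ - (a * e₂) * b = (e₁ - a * b) + -((a * e₂ - a) * b) := by noncomm_ring
        rw [heq]; exact J.add_mem hc₁ (J.neg_mem hx)
      have k2 : (a * e₂) * b = (a * b) * e₂ := by
        rw [mul_assoc, hcen₂ b, ← mul_assoc]
      have k3 : e₁ - (a * b) * e₂ ∈ J := by rw [← k2]; exact k1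
      have k4 : (a * b) * e₂ - e₁ * e₂ ∈ J := by
        have hx : (-(e₁ - a * b)) * e₂ ∈ J := jr _ (J.neg_mem hc₁)
        have heq : (a * b) * e₂ - e₁ * e₂ = (-(e₁ - a * b)) * e₂ := by noncomm_ring
        rw [heq]; exact hx
      have heq : e₁ - e₁ * e₂ = (e₁ - (a * b) * e₂) + ((a * b) * e₂ - e₁ * e₂) := by
        noncomm_ring
      rw [heq]; exact J.add_mem k3 k4
    have hca : e₁ - b * a ∈ J := by
      have heq : e₁ - b * a = ((e₁ - e₁ * e₂) + -(e₂ - e₁ * e₂)) + (e₂ - b * a) := by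
        noncomm_ring
      rw [heq]; exact J.add_mem (J.add_mem h6 (J.neg_mem h5)) hc₂
    exact ⟨e₁, b, he₁, hcen₁, hc₁, hca, hi⟩
  choose E C hid hcen hac hcaJ heaJ using hA3
  have hsetup : McCoyAux.Setup {x : R | x ∈ J} E C n :=
    { zero_mem := J.zero_mem
      add_mem := fun hx hy => J.add_mem hx hy
      neg_mem := fun hx => J.neg_mem hx
      smul_left := fun r _ hx => J.mul_mem_left r hx
      smul_right := fun {x} r hx => jr r hx
      idem := hid
      central := hcen
      e_sub_ac := hac
      e_sub_ca := hcaJ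
      ea_sub_a := heaJ
      prod_eq_zero := hlist }
  exact ⟨McCoyAux.main_right hsetup f g hfg hg, McCoyAux.main_left hsetup f g hfg hf⟩
end
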